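/- arXiv:0905.0298 — 3 statements merged into one kernel-verified Lean document; each statement's English description precedes it below -/
import Mathlib

section
/- Let m ≥ 3 and let A and B be finite sets of complex numbers, each having no m points on a line. Then the set S of all v ∈ ℂ for which the set A + v·B := {a + v·b : a ∈ A, b ∈ B} either has fewer than |A|·|B| points or has m points on a line, has Lebesgue measure zero in ℂ. -/
open MeasureTheory

noncomputable section

/-- `Q` is a similar copy of `P`: the image of `P` under an
orientation-preserving similarity `p ↦ z·p + w`, `z ≠ 0`. -/
def IsSimilarCopy (P Q : Finset ℂ) : Prop :=
  ∃ z w : ℂ, z ≠ 0 ∧ (Q : Set ℂ) = (fun p => z * p + w) '' (P : Set ℂ)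

/-- `SP P Q` is the number of subsets of `Q` that are similar copies of `P`. -/
def SP (P Q : Finset ℂ) : ℕ :=
  letI := Classical.decPred (IsSimilarCopy P)
  (Q.powerset.filter (IsSimilarCopy P)).card

/-- `Q` has no `m` points on a line: every collinear subset has at most `m - 1` points. -/
def NoMOnLine (m : ℕ) (Q : Finset ℂ) : Prop :=
  ∀ S ⊆ Q, Collinear ℝ (S : Set ℂ) → S.card ≤ m - 1

/-- `Q` has `m` points on a line. -/
def HasMOnLine (m : ℕ) (Q : Finset ℂ) : Prop :=
  ∃ S ⊆ Q, S.card = m ∧ Collinear ℝ (S : Set ℂ)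

/-- The number of orientation-preserving isometries of `ℂ` mapping `P` onto itself,
i.e. maps `p ↦ u·p + w` with `|u| = 1` fixing `P` setwise. -/
def IsoPlusCard (P : Finset ℂ) : ℕ :=
  {uw : ℂ × ℂ | ‖uw.1‖ = 1 ∧
    (fun p => uw.1 * p + uw.2) '' (P : Set ℂ) = (P : Set ℂ)}.ncard

/-- The index of `A` with respect to the pattern `P`. -/
def indexP (P A : Finset ℂ) : ℝ :=
  Real.log ((IsoPlusCard P : ℝ) * SP P A + A.card) / Real.log A.card

/-- `SPnm P n m` : the maximum of `SP P Q` over `n`-point sets `Q`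
with no `m` points on a line. -/
def SPnm (P : Finset ℂ) (n m : ℕ) : ℕ :=
  sSup {k | ∃ Q : Finset ℂ, Q.card = n ∧ NoMOnLine m Q ∧ SP P Q = k}

/-- `SPn P n` : the maximum of `SP P Q` over all `n`-point sets `Q`. -/
def SPn (P : Finset ℂ) (n : ℕ) : ℕ :=
  sSup {k | ∃ Q : Finset ℂ, Q.card = n ∧ SP P Q = k}

/-- The Minkowski sum `B + C` of two finite sets of complex numbers. -/
def minkSum (B C : Finset ℂ) : Finset ℂ :=
  letI := Classical.decEq ℂ
  Finset.image₂ (· + ·) B C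

/-- `Q` contains four pairwise distinct points forming a parallelogram. -/
def HasParallelogram (Q : Finset ℂ) : Prop :=
  ∃ p₁ ∈ Q, ∃ p₂ ∈ Q, ∃ p₃ ∈ Q, ∃ p₄ ∈ Q,
    p₁ ≠ p₂ ∧ p₁ ≠ p₃ ∧ p₁ ≠ p₄ ∧ p₂ ≠ p₃ ∧ p₂ ≠ p₄ ∧ p₃ ≠ p₄ ∧
    p₂ - p₁ = p₄ - p₃

/-- `Q` is parallelogram-free: no 3 collinear points and no parallelogram. -/
def ParallelogramFree (Q : Finset ℂ) : Prop :=
  (∀ S ⊆ Q, Collinear ℝ (S : Set ℂ) → S.card ≤ 2) ∧ ¬ HasParallelogram Q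

/-- The set `Q(P, A, u, v) = ⋃_{p ∈ P} (u·p + (v·p − p + 1)·A)`. -/
def Qset (P A : Finset ℂ) (u v : ℂ) : Finset ℂ :=
  letI := Classical.decEq ℂ
  P.biUnion fun p => A.image fun a => u * p + (v * p - p + 1) * a

/-- The vertex set of the regular `k`-gon. -/
def Rpoly (k : ℕ) : Finset ℂ :=
  letI := Classical.decEq ℂ
  (Finset.range k).image fun j : ℕ => Complex.exp (2 * Real.pi * Complex.I * (j : ℂ) / (k : ℂ))

/-- `ω = e^{2πi/3}`. -/
def omega3 : ℂ := Complex.exp (2 * Real.pi * Complex.I / 3)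

/-- The vertex set `{1, ω, ω²}` of an equilateral triangle. -/
def triEq : Finset ℂ :=
  letI := Classical.decEq ℂ
  {1, omega3, omega3 ^ 2}

/-- The set `A + v·B`. -/
def AvB (A B : Finset ℂ) (v : ℂ) : Finset ℂ :=
  letI := Classical.decEq ℂ
  Finset.image₂ (fun a b => a + v * b) A B


section Helpers
open Complex ComplexConjugate


lemma real_ratio {z w : ℂ} (hw : w ≠ 0) (h : (z * conj w).im = 0) : ∃ r : ℝ, z = (r : ℂ) * w := by
  refine ⟨(z * conj w).re / Complex.normSq w, ?_⟩
  have h1 : (z * conj w : ℂ) = ((z * conj w).re : ℂ) := by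
    rw [Complex.ext_iff]; simp [h]
  have h3 : conj w * w = (Complex.normSq w : ℂ) := by
    rw [mul_comm, Complex.mul_conj]
  have h4 : Complex.normSq w ≠ 0 := by simpa using hw
  have key : z * (Complex.normSq w : ℂ) = ((z * conj w).re : ℂ) * w := by
    rw [← h3, ← mul_assoc]; nth_rewrite 1 [h1]; rfl
  rw [Complex.ofReal_div, div_mul_eq_mul_div, eq_div_iff (Complex.ofReal_ne_zero.2 h4)]
  exact key

lemma quad_expand (α β γ δ v : ℂ) :
    ((α + v * β) * conj (γ + v * δ)).im =
      (β * conj δ).im * (v.re ^ 2 + v.im ^ 2) + ((α * conj δ).im + (β * conj γ).im) * v.re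
        + ((β * conj γ).re - (α * conj δ).re) * v.im + (α * conj γ).im := by
  simp [Complex.add_im, Complex.add_re, Complex.mul_im, Complex.mul_re, Complex.conj_re,
    Complex.conj_im]
  ring

lemma collinear3_im {z1 z2 z3 : ℂ} (h : Collinear ℝ ({z1, z2, z3} : Set ℂ)) :
    ((z2 - z1) * conj (z3 - z1)).im = 0 := by
  have h1 : z1 ∈ ({z1, z2, z3} : Set ℂ) := by simp
  rw [collinear_iff_of_mem h1] at h
  obtain ⟨d, hd⟩ := h
  obtain ⟨r2, h2⟩ := hd z2 (by simp)
  obtain ⟨r3, h3⟩ := hd z3 (by simp)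
  have e2 : z2 - z1 = (r2 : ℂ) * d := by
    rw [h2, vadd_eq_add, Complex.real_smul]; ring
  have e3 : z3 - z1 = (r3 : ℂ) * d := by
    rw [h3, vadd_eq_add, Complex.real_smul]; ring
  rw [e2, e3]
  simp [Complex.mul_im, Complex.mul_re, Complex.conj_re, Complex.conj_im]
  ring


example : (volume : Measure ℂ).IsAddHaarMeasure := inferInstance

lemma null_line (L M N : ℝ) (hLM : ¬(L = 0 ∧ M = 0)) :
    volume {v : ℂ | L * v.re + M * v.im + N = 0} = 0 := by
  set f : ℂ →ₗ[ℝ] ℝ := L • Complex.reLm + M • Complex.imLm with hf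
  have hfv : ∀ v : ℂ, f v = L * v.re + M * v.im := by
    intro v; simp [hf, Complex.reLm, Complex.imLm]
  have hfne : f ≠ 0 := by
    intro h0
    have := hfv (Complex.mk L M)
    rw [h0] at this
    simp at this
    exact hLM ⟨by nlinarith [sq_nonneg L, sq_nonneg M], by nlinarith [sq_nonneg L, sq_nonneg M]⟩
  rcases Set.eq_empty_or_nonempty {v : ℂ | L * v.re + M * v.im + N = 0} with he | ⟨v₀, hv₀⟩
  · rw [he]; simp
  · have hset : {v : ℂ | L * v.re + M * v.im + N = 0}
        = (fun v => v + (-v₀)) ⁻¹' (LinearMap.ker f : Set ℂ) := by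
      ext v
      simp only [Set.mem_setOf_eq, Set.mem_preimage, SetLike.mem_coe, LinearMap.mem_ker,
        map_add, map_neg, hfv, Complex.add_re, Complex.add_im, Complex.neg_re, Complex.neg_im]
      have : L * v₀.re + M * v₀.im + N = 0 := hv₀
      constructor <;> intro h <;> linarith
    rw [hset, measure_preimage_add_right]
    apply MeasureTheory.Measure.addHaar_submodule
    intro htop
    apply hfne
    ext w
    have hw : w ∈ LinearMap.ker f := htop ▸ Submodule.mem_top
    simpa using hw

lemma null_quad (K L M N : ℝ) (h : ¬(K = 0 ∧ L = 0 ∧ M = 0 ∧ N = 0)) :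
    volume {v : ℂ | K * (v.re ^ 2 + v.im ^ 2) + L * v.re + M * v.im + N = 0} = 0 := by
  by_cases hK : K = 0
  · by_cases hLM : L = 0 ∧ M = 0
    · have hN : N ≠ 0 := by tauto
      have : {v : ℂ | K * (v.re ^ 2 + v.im ^ 2) + L * v.re + M * v.im + N = 0} = ∅ := by
        ext v; simp [hK, hLM.1, hLM.2, hN]
      rw [this]; simp
    · have : {v : ℂ | K * (v.re ^ 2 + v.im ^ 2) + L * v.re + M * v.im + N = 0}
          = {v : ℂ | L * v.re + M * v.im + N = 0} := by
        ext v; simp [hK]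
      rw [this]; exact null_line L M N hLM
  · set c : ℂ := ⟨L / (2 * K), M / (2 * K)⟩ with hc
    set R : ℝ := Complex.normSq c - N / K with hR
    refine measure_mono_null (fun v hv => ?_)
      (MeasureTheory.Measure.addHaar_sphere volume (-c) (Real.sqrt R))
    have h1 : K * (v.re ^ 2 + v.im ^ 2) + L * v.re + M * v.im + N = 0 := hv
    have h2 : Complex.normSq (v + c) = R := by
      have hcre : c.re = L / (2 * K) := rfl
      have hcim : c.im = M / (2 * K) := rfl
      rw [hR, Complex.normSq_apply, Complex.normSq_apply, Complex.add_re, Complex.add_im,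
        hcre, hcim]
      field_simp
      linear_combination (4*K) * h1
    have h3 : dist v (-c) = Real.sqrt R := by
      rw [Complex.dist_eq, sub_neg_eq_add, Complex.norm_def, h2]
    exact h3

lemma coeffs_zero {α β γ δ : ℂ} (h : ∀ w : ℂ, ((α + w * β) * conj (γ + w * δ)).im = 0) :
    (β * conj δ).im = 0 ∧ (α * conj γ).im = 0 ∧ α * conj δ = conj β * γ := by
  have e : ∀ w : ℂ,
      (β * conj δ).im * (w.re ^ 2 + w.im ^ 2) + ((α * conj δ).im + (β * conj γ).im) * w.re
        + ((β * conj γ).re - (α * conj δ).re) * w.im + (α * conj γ).im = 0 :=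
    fun w => (quad_expand α β γ δ w).symm.trans (h w)
  have e0 := e 0
  have e1 := e 1
  have e2 := e (-1)
  have e3 := e Complex.I
  simp only [Complex.zero_re, Complex.zero_im, Complex.one_re, Complex.one_im, Complex.neg_re,
    Complex.neg_im, Complex.I_re, Complex.I_im] at e0 e1 e2 e3
  have hN : (α * conj γ).im = 0 := by linarith
  have hK : (β * conj δ).im = 0 := by nlinarith
  have hL : (α * conj δ).im + (β * conj γ).im = 0 := by nlinarith
  have hM : (β * conj γ).re - (α * conj δ).re = 0 := by nlinarith
  refine ⟨hK, hN, ?_⟩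
  apply Complex.ext
  · simp only [Complex.mul_re, Complex.mul_im, Complex.conj_re, Complex.conj_im] at hM ⊢
    linarith
  · simp only [Complex.mul_re, Complex.mul_im, Complex.conj_re, Complex.conj_im] at hL ⊢
    linarith

noncomputable def Fc (T : (ℂ × ℂ) × (ℂ × ℂ) × (ℂ × ℂ)) (w : ℂ) : ℝ :=
  ((T.2.1.1 - T.1.1 + w * (T.2.1.2 - T.1.2)) *
    conj (T.2.2.1 - T.1.1 + w * (T.2.2.2 - T.1.2))).im


lemma null_Fc (T : (ℂ × ℂ) × (ℂ × ℂ) × (ℂ × ℂ)) :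
    volume {v : ℂ | Fc T v = 0 ∧ ∃ w, Fc T w ≠ 0} = 0 := by
  by_cases hg : ∃ w, Fc T w ≠ 0
  · set α := T.2.1.1 - T.1.1
    set β := T.2.1.2 - T.1.2
    set γ := T.2.2.1 - T.1.1
    set δ := T.2.2.2 - T.1.2
    have hFc : ∀ w, Fc T w = ((α + w * β) * conj (γ + w * δ)).im := fun w => rfl
    have hset : {v : ℂ | Fc T v = 0 ∧ ∃ w, Fc T w ≠ 0}
        = {v : ℂ | (β * conj δ).im * (v.re ^ 2 + v.im ^ 2)
            + ((α * conj δ).im + (β * conj γ).im) * v.re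
            + ((β * conj γ).re - (α * conj δ).re) * v.im + (α * conj γ).im = 0} := by
      ext v
      simp only [Set.mem_setOf_eq, hg, and_true]
      rw [hFc v, quad_expand α β γ δ v]
    rw [hset]
    apply null_quad
    rintro ⟨hK, hL, hM, hN⟩
    obtain ⟨w, hw⟩ := hg
    apply hw
    rw [hFc w, quad_expand α β γ δ w, hK, hL, hM, hN]
    ring
  · have : {v : ℂ | Fc T v = 0 ∧ ∃ w, Fc T w ≠ 0} = ∅ := by
      ext v; simp only [Set.mem_setOf_eq, hg, and_false]; simp
    rw [this]; simp

lemma null_coll (p q : ℂ × ℂ) :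
    volume {v : ℂ | p.1 + v * p.2 = q.1 + v * q.2 ∧ p ≠ q} = 0 := by
  by_cases hpq : p = q
  · have : {v : ℂ | p.1 + v * p.2 = q.1 + v * q.2 ∧ p ≠ q} = ∅ := by
      ext v; simp [hpq]
    rw [this]; simp
  by_cases hb : p.2 = q.2
  · have : {v : ℂ | p.1 + v * p.2 = q.1 + v * q.2 ∧ p ≠ q} = ∅ := by
      ext v
      simp only [Set.mem_setOf_eq, Set.mem_empty_iff_false, iff_false, not_and]
      intro he
      rw [hb] at he
      exact absurd (Prod.ext (by linear_combination he) hb) hpq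
    rw [this]; simp
  · apply measure_mono_null (t := {(q.1 - p.1) / (p.2 - q.2)})
    · rintro v ⟨he, -⟩
      have hne : p.2 - q.2 ≠ 0 := sub_ne_zero.2 hb
      have : v * (p.2 - q.2) = q.1 - p.1 := by linear_combination he
      simp only [Set.mem_singleton_iff]
      field_simp
      linear_combination this
    · exact measure_singleton _

lemma main_step (m : ℕ) (hm : 3 ≤ m) (A B : Finset ℂ)
    (hA : NoMOnLine m A) (hB : NoMOnLine m B) (v : ℂ) (S : Finset ℂ) (hSsub : S ⊆ AvB A B v) (hScard : S.card = m)
    (hScol : Collinear ℝ (S : Set ℂ)) :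
    ∃ T ∈ (A ×ˢ B) ×ˢ (A ×ˢ B) ×ˢ (A ×ˢ B), Fc T v = 0 ∧ ∃ w, Fc T w ≠ 0 := by
  classical
  by_contra hcon
  push_neg at hcon
  have hrep : ∀ s ∈ S, ∃ p : ℂ × ℂ, p ∈ A ×ˢ B ∧ p.1 + v * p.2 = s := by
    intro s hs
    have hmem := hSsub hs
    simp only [AvB, Finset.mem_image₂] at hmem
    obtain ⟨a, ha, b, hb, hab⟩ := hmem
    exact ⟨(a, b), Finset.mem_product.2 ⟨ha, hb⟩, hab⟩
  choose! f hfmem hfeq using hrep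
  have hS3 : 3 ≤ S.card := hScard ▸ hm
  obtain ⟨s₁, hs₁⟩ : S.Nonempty := Finset.card_pos.1 (by omega)
  set S' := S.erase s₁ with hS'
  have hS'sub : S' ⊆ S := Finset.erase_subset _ _
  have hS'card : S'.card = m - 1 := by rw [hS', Finset.card_erase_of_mem hs₁, hScard]
  obtain ⟨s₂, hs₂⟩ : S'.Nonempty := Finset.card_pos.1 (by omega)
  set α : ℂ → ℂ := fun s => (f s).1 - (f s₁).1 with hα
  set β : ℂ → ℂ := fun s => (f s).2 - (f s₁).2 with hβ
  have hCond : ∀ s ∈ S', ∀ t ∈ S',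
      (β s * conj (β t)).im = 0 ∧ (α s * conj (α t)).im = 0 ∧
        α s * conj (β t) = conj (β s) * α t := by
    intro s hs t ht
    have hsS := hS'sub hs
    have htS := hS'sub ht
    have hT : (f s₁, f s, f t) ∈ (A ×ˢ B) ×ˢ (A ×ˢ B) ×ˢ (A ×ˢ B) :=
      Finset.mem_product.2 ⟨hfmem s₁ hs₁,
        Finset.mem_product.2 ⟨hfmem s hsS, hfmem t htS⟩⟩
    have hFv : Fc (f s₁, f s, f t) v = 0 := by
      have he1 : (f s).1 - (f s₁).1 + v * ((f s).2 - (f s₁).2) = s - s₁ := by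
        linear_combination hfeq s hsS - hfeq s₁ hs₁
      have he2 : (f t).1 - (f s₁).1 + v * ((f t).2 - (f s₁).2) = t - s₁ := by
        linear_combination hfeq t htS - hfeq s₁ hs₁
      have hfc : Fc (f s₁, f s, f t) v = ((s - s₁) * conj (t - s₁)).im := by
        simp only [Fc]; rw [he1, he2]
      rw [hfc]
      apply collinear3_im
      apply hScol.subset
      intro x hx
      rcases hx with rfl | rfl | rfl
      · exact hs₁
      · exact hsS
      · exact htS
    have hall : ∀ w, Fc (f s₁, f s, f t) w = 0 := hcon _ hT hFv
    exact coeffs_zero hall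
  have hne0 : ∀ s ∈ S', ¬(α s = 0 ∧ β s = 0) := by
    rintro s hs ⟨h1, h2⟩
    have hf : f s = f s₁ := Prod.ext (by rwa [hα, sub_eq_zero] at h1) (by rwa [hβ, sub_eq_zero] at h2)
    have : s = s₁ := by rw [← hfeq s (hS'sub hs), ← hfeq s₁ hs₁, hf]
    exact (Finset.mem_erase.1 hs).1 this
  have final : ∀ (g : ℂ → ℂ) (C : Finset ℂ), (∀ s ∈ S, g s ∈ C) → NoMOnLine m C →
      (∀ s ∈ S, ∀ t ∈ S, g s = g t → s = t) →
      (∃ z d : ℂ, ∀ s ∈ S, ∃ r : ℝ, g s = (r : ℂ) * d + z) → False := by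
    rintro g C hgC hCno hginj ⟨z, d, hcol⟩
    have hsub : S.image g ⊆ C := Finset.image_subset_iff.2 hgC
    have hcard : (S.image g).card = m := by
      rw [Finset.card_image_of_injOn fun s hs t ht => hginj s hs t ht, hScard]
    have hcoll : Collinear ℝ ((S.image g : Finset ℂ) : Set ℂ) := by
      rw [collinear_iff_exists_forall_eq_smul_vadd]
      refine ⟨z, d, fun p hp => ?_⟩
      simp only [Finset.coe_image, Set.mem_image, Finset.mem_coe] at hp
      obtain ⟨s, hs, rfl⟩ := hp
      obtain ⟨r, hr⟩ := hcol s hs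
      exact ⟨r, by rw [hr, vadd_eq_add, Complex.real_smul]⟩
    have := hCno _ hsub hcoll
    omega
  by_cases hb : ∀ s ∈ S', β s = 0
  · -- all second coordinates equal
    have hbeq : ∀ s ∈ S, (f s).2 = (f s₁).2 := by
      intro s hs
      rcases eq_or_ne s s₁ with rfl | hne
      · rfl
      · have := hb s (Finset.mem_erase.2 ⟨hne, hs⟩)
        rwa [hβ, sub_eq_zero] at this
    have hα2 : α s₂ ≠ 0 := fun h => hne0 s₂ hs₂ ⟨h, hb s₂ hs₂⟩
    refine final (fun s => (f s).1) A (fun s hs => (Finset.mem_product.1 (hfmem s hs)).1) hA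
      ?_ ⟨(f s₁).1, α s₂, ?_⟩
    · intro s hs t ht h
      have h' : (f s).1 = (f t).1 := h
      have he : (f s).1 + v * (f s).2 = (f t).1 + v * (f t).2 := by
        rw [h', hbeq s hs, hbeq t ht]
      rw [hfeq s hs, hfeq t ht] at he
      exact he
    · intro s hs
      rcases eq_or_ne s s₁ with rfl | hne
      · exact ⟨0, by simp⟩
      · have hs' : s ∈ S' := Finset.mem_erase.2 ⟨hne, hs⟩
        obtain ⟨r, hr⟩ := real_ratio hα2 (hCond s hs' s₂ hs₂).2.1
        refine ⟨r, ?_⟩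
        rw [← hr, hα]; ring
  · push_neg at hb
    obtain ⟨s₃, hs₃, hβ3⟩ := hb
    have hconj3 : conj (β s₃) ≠ 0 := fun h => hβ3 (by simpa using congrArg conj h)
    have key2 : ∀ s ∈ S, ∃ r : ℝ,
        (f s).1 = (r : ℂ) * α s₃ + (f s₁).1 ∧ (f s).2 = (r : ℂ) * β s₃ + (f s₁).2 := by
      intro s hs
      rcases eq_or_ne s s₁ with rfl | hne
      · exact ⟨0, by simp, by simp⟩
      · have hs' : s ∈ S' := Finset.mem_erase.2 ⟨hne, hs⟩
        obtain ⟨r, hr⟩ := real_ratio hβ3 (hCond s hs' s₃ hs₃).1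
        have h3 := (hCond s hs' s₃ hs₃).2.2
        rw [hr] at h3
        have : α s * conj (β s₃) = (r : ℂ) * α s₃ * conj (β s₃) := by
          rw [h3, map_mul, Complex.conj_ofReal]; ring
        have hαs : α s = (r : ℂ) * α s₃ := mul_right_cancel₀ hconj3 this
        exact ⟨r, by rw [← hαs, hα]; ring, by rw [← hr, hβ]; ring⟩
    by_cases hα3 : α s₃ = 0
    · refine final (fun s => (f s).2) B (fun s hs => (Finset.mem_product.1 (hfmem s hs)).2) hB
        ?_ ⟨(f s₁).2, β s₃, fun s hs => ((key2 s hs).imp fun r h => h.2)⟩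
      intro s hs t ht h
      have h' : (f s).2 = (f t).2 := h
      obtain ⟨r, hr1, -⟩ := key2 s hs
      obtain ⟨r', hr1', -⟩ := key2 t ht
      have he : (f s).1 + v * (f s).2 = (f t).1 + v * (f t).2 := by
        rw [hr1, hr1', hα3, h']; ring
      rw [hfeq s hs, hfeq t ht] at he
      exact he
    · refine final (fun s => (f s).1) A (fun s hs => (Finset.mem_product.1 (hfmem s hs)).1) hA
        ?_ ⟨(f s₁).1, α s₃, fun s hs => ((key2 s hs).imp fun r h => h.1)⟩
      intro s hs t ht h
      have h' : (f s).1 = (f t).1 := h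
      obtain ⟨r, hr1, hr2⟩ := key2 s hs
      obtain ⟨r', hr1', hr2'⟩ := key2 t ht
      rw [hr1, hr1'] at h'
      have hrr : (r : ℂ) = (r' : ℂ) := mul_right_cancel₀ hα3 (by linear_combination h')
      have he : (f s).1 + v * (f s).2 = (f t).1 + v * (f t).2 := by
        rw [hr1, hr1', hr2, hr2', hrr]
      rw [hfeq s hs, hfeq t ht] at he
      exact he

end Helpers

/-- If `A` and `B` have no `m` points on a line, then the set of `v ∈ ℂ` for which
`A + v·B` has fewer than `|A|·|B|` points or has `m` points on a line has Lebesgue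
measure zero. -/
theorem stmt2 (m : ℕ) (hm : 3 ≤ m) (A B : Finset ℂ)
    (hA : NoMOnLine m A) (hB : NoMOnLine m B) :
    volume {v : ℂ | (AvB A B v).card < A.card * B.card ∨ HasMOnLine m (AvB A B v)} = 0 := by
  classical
  have hN : volume ((⋃ u ∈ (((A ×ˢ B) ×ˢ (A ×ˢ B) : Finset ((ℂ × ℂ) × (ℂ × ℂ))) : Set ((ℂ × ℂ) × (ℂ × ℂ))),
        {v : ℂ | u.1.1 + v * u.1.2 = u.2.1 + v * u.2.2 ∧ u.1 ≠ u.2}) ∪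
      ⋃ T ∈ (((A ×ˢ B) ×ˢ (A ×ˢ B) ×ˢ (A ×ˢ B) : Finset ((ℂ × ℂ) × (ℂ × ℂ) × (ℂ × ℂ))) :
          Set ((ℂ × ℂ) × (ℂ × ℂ) × (ℂ × ℂ))),
        {v : ℂ | Fc T v = 0 ∧ ∃ w, Fc T w ≠ 0}) = 0 := by
    refine measure_union_null ?_ ?_
    · exact (measure_biUnion_null_iff (Finset.countable_toSet _)).2 fun u _ => null_coll u.1 u.2
    · exact (measure_biUnion_null_iff (Finset.countable_toSet _)).2 fun T _ => null_Fc T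
  refine measure_mono_null (fun v hv => ?_) hN
  by_cases hcol : ∃ p ∈ A ×ˢ B, ∃ q ∈ A ×ˢ B, (p.1 + v * p.2 = q.1 + v * q.2 ∧ p ≠ q)
  · obtain ⟨p, hp, q, hq, hpq⟩ := hcol
    exact Or.inl (Set.mem_biUnion (Finset.mem_coe.2 (Finset.mem_product.2 ⟨hp, hq⟩))
      (show v ∈ {w : ℂ | (p, q).1.1 + w * (p, q).1.2 = (p, q).2.1 + w * (p, q).2.2
        ∧ (p, q).1 ≠ (p, q).2} from hpq))
  · push_neg at hcol
    have hcard : (AvB A B v).card = A.card * B.card := by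
      simp only [AvB]
      rw [Finset.card_image₂_iff]
      rintro ⟨a, b⟩ hab ⟨a', b'⟩ hab' he
      simp only [Finset.coe_product, Set.mem_prod, Finset.mem_coe] at hab hab'
      exact hcol (a, b) (Finset.mem_product.2 ⟨hab.1, hab.2⟩)
        (a', b') (Finset.mem_product.2 ⟨hab'.1, hab'.2⟩) he
    rcases hv with hv | hv
    · omega
    · obtain ⟨S, hSsub, hScard, hScol⟩ := hv
      obtain ⟨T, hT, h1, h2⟩ := main_step m hm A B hA hB v S hSsub hScard hScol
      exact Or.inr (Set.mem_biUnion (Finset.mem_coe.2 hT)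
        (show v ∈ {w : ℂ | Fc T w = 0 ∧ ∃ w', Fc T w' ≠ 0} from ⟨h1, h2⟩))
end
end

section
/- Let △ = {1, ω, ω²} ⊆ ℂ, where ω = e^{2πi/3}, be the vertex set of an equilateral triangle. Then there exist a constant c > 0 and a threshold N such that for all n ≥ N, S_△(n, 3) ≥ c·n^{log 102 / log 15}. -/
open MeasureTheory

noncomputable section

-- ## Auxiliary development

lemma omega3_prim : IsPrimitiveRoot omega3 3 := by
  have := Complex.isPrimitiveRoot_exp 3 (by norm_num)
  simpa [omega3] using this

lemma omega3_ne_one : omega3 ≠ 1 := omega3_prim.ne_one (by norm_num)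

lemma omega3_cube : omega3 ^ 3 = 1 := omega3_prim.pow_eq_one

lemma omega3_sq : omega3 ^ 2 + omega3 + 1 = 0 := by
  have h : (omega3 - 1) * (omega3 ^ 2 + omega3 + 1) = 0 := by
    have := omega3_cube; linear_combination this
  rcases mul_eq_zero.mp h with h1 | h2
  · exact absurd (sub_eq_zero.mp h1) omega3_ne_one
  · exact h2

lemma omega3_im_pos : 0 < omega3.im := by
  have h : omega3 = Complex.exp ((2 * Real.pi / 3 : ℝ) * Complex.I) := by
    unfold omega3; push_cast; ring_nf
  rw [h, Complex.exp_ofReal_mul_I_im]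
  exact Real.sin_pos_of_pos_of_lt_pi (by positivity) (by linarith [Real.pi_pos])

lemma omega3_im_ne : omega3.im ≠ 0 := ne_of_gt omega3_im_pos


/-- cross product of two complex numbers viewed as plane vectors -/
def cross (z w : ℂ) : ℝ := z.im * w.re - z.re * w.im

def det3 (p q r : ℂ) : ℝ := cross (q - p) (r - p)

def zdet (p q r : ℤ × ℤ) : ℤ :=
  (q.2 - p.2) * (r.1 - p.1) - (q.1 - p.1) * (r.2 - p.2)

def ee (p : ℤ × ℤ) : ℂ := (p.1 : ℂ) + (p.2 : ℂ) * omega3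

lemma ee_re (p : ℤ × ℤ) : (ee p).re = (p.1 : ℝ) + (p.2 : ℝ) * omega3.re := by
  simp [ee, Complex.add_re, Complex.mul_re]

lemma ee_im (p : ℤ × ℤ) : (ee p).im = (p.2 : ℝ) * omega3.im := by
  simp [ee, Complex.add_im, Complex.mul_im]

lemma ee_inj : Function.Injective ee := by
  intro p q h
  have him := congrArg Complex.im h
  rw [ee_im, ee_im] at him
  have h2 : (p.2 : ℝ) = (q.2 : ℝ) := mul_right_cancel₀ omega3_im_ne him
  have hre := congrArg Complex.re h
  rw [ee_re, ee_re, h2] at hre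
  have h1 : (p.1 : ℝ) = (q.1 : ℝ) := by linarith
  exact Prod.ext (by exact_mod_cast h1) (by exact_mod_cast h2)

lemma det3_ee (p q r : ℤ × ℤ) :
    det3 (ee p) (ee q) (ee r) = (zdet p q r : ℝ) * omega3.im := by
  simp only [det3, cross, Complex.sub_re, Complex.sub_im, ee_re, ee_im, zdet]
  push_cast
  ring

lemma det3_ee_ne {p q r : ℤ × ℤ} (h : zdet p q r ≠ 0) :
    det3 (ee p) (ee q) (ee r) ≠ 0 := by
  rw [det3_ee]
  exact mul_ne_zero (by exact_mod_cast h) omega3_im_ne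

lemma collinear_det3 {p q r : ℂ} (h : Collinear ℝ ({p, q, r} : Set ℂ)) :
    det3 p q r = 0 := by
  rw [collinear_iff_of_mem (Set.mem_insert p _)] at h
  obtain ⟨v, hv⟩ := h
  obtain ⟨t1, ht1⟩ := hv q (by simp)
  obtain ⟨t2, ht2⟩ := hv r (by simp)
  have h1 : q - p = (t1 : ℂ) * v := by rw [ht1]; simp [Complex.real_smul]
  have h2 : r - p = (t2 : ℂ) * v := by rw [ht2]; simp [Complex.real_smul]
  simp only [det3, cross, h1, h2, Complex.mul_re, Complex.mul_im,
    Complex.ofReal_re, Complex.ofReal_im]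
  ring


open Polynomial in
lemma quad_finite (a b c : ℝ) (h : ¬(a = 0 ∧ b = 0 ∧ c = 0)) :
    {x : ℝ | a + b * x + c * x ^ 2 = 0}.Finite := by
  set p : ℝ[X] := C a + C b * X + C c * X ^ 2 with hp
  have hpne : p ≠ 0 := by
    intro h0
    apply h
    have h1 := congrArg (fun q => Polynomial.coeff q 0) h0
    have h2 := congrArg (fun q => Polynomial.coeff q 1) h0
    have h3 := congrArg (fun q => Polynomial.coeff q 2) h0
    simp [hp, coeff_add, coeff_C, coeff_C_mul, coeff_X, coeff_X_pow] at h1 h2 h3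
    exact ⟨h1, h2, h3⟩
  apply (Polynomial.finite_setOf_isRoot hpne).subset
  intro x hx
  simp only [Set.mem_setOf_eq] at hx ⊢
  simp [IsRoot, hp, eval_add, eval_mul, eval_pow, eval_C, eval_X]
  linarith

lemma lin_finite_c (z w : ℂ) (h : ¬(z = 0 ∧ w = 0)) :
    {x : ℝ | z + x * w = 0}.Finite := by
  rcases eq_or_ne w 0 with hw | hw
  · subst hw
    have hz : z ≠ 0 := fun hz => h ⟨hz, rfl⟩
    convert Set.finite_empty
    ext x; simp [hz]
  · apply Set.Finite.subset (Set.finite_singleton ((-z / w).re))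
    intro x hx
    simp only [Set.mem_setOf_eq] at hx
    have : (x : ℂ) = -z / w := by field_simp; linear_combination hx
    simp [Set.mem_singleton_iff, ← this, Complex.ofReal_re]

lemma exists_avoiding (Bad : Set ℝ) (h : Bad.Finite) : ∃ x : ℝ, 0 < x ∧ x ∉ Bad := by
  have : ((Set.Ioi (0:ℝ)) \ Bad).Infinite := (Set.Ioi_infinite 0).diff h
  obtain ⟨x, hx⟩ := this.nonempty
  exact ⟨x, hx.1, hx.2⟩


def baseL : List (ℤ × ℤ) := [(-4, 1), (-1, -5), (5, 4), (2, 2), (-2, 0), (0, -2), (-7, -6), (6, -1), (1, 7), (2, -3), (3, 5), (-5, -2), (-1, 3), (-3, -4), (4, 1)]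

def trisL : List ((ℤ × ℤ) × (ℤ × ℤ) × (ℤ × ℤ)) := [((-4, 1), (-1, -5), (5, 4)), ((-4, 1), (2, 2), (1, 7)), ((-4, 1), (-3, -4), (2, 2)), ((-4, 1), (-5, -2), (-2, 0)), ((-4, 1), (-2, 0), (-1, 3)), ((-4, 1), (-7, -6), (0, -2)), ((-4, 1), (0, -2), (3, 5)), ((-1, -5), (6, -1), (2, 2)), ((-1, -5), (2, 2), (-5, -2)), ((-1, -5), (-2, 0), (-7, -6)), ((-1, -5), (4, 1), (-2, 0)), ((-1, -5), (2, -3), (0, -2)), ((-1, -5), (0, -2), (-3, -4)), ((5, 4), (3, 5), (2, 2)), ((5, 4), (2, 2), (4, 1)), ((5, 4), (1, 7), (-2, 0)), ((5, 4), (-2, 0), (2, -3)), ((5, 4), (0, -2), (6, -1)), ((5, 4), (-1, 3), (0, -2)), ((2, 2), (-2, 0), (0, -2)), ((-7, -6), (6, -1), (1, 7)), ((-7, -6), (2, -3), (-1, 3)), ((-7, -6), (-3, -4), (-5, -2)), ((6, -1), (4, 1), (2, -3)), ((6, -1), (3, 5), (-3, -4)), ((1, 7), (-1, 3), (3, 5)),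 ((1, 7), (-5, -2), (4, 1)), ((2, -3), (3, 5), (-5, -2)), ((-1, 3), (-3, -4), (4, 1))]

/-- plus-triangle residue conditions: x + ω y + ω² z = 0 in Eisenstein coords -/
def pcond (t : (ℤ × ℤ) × (ℤ × ℤ) × (ℤ × ℤ)) : Prop :=
  t.1.1 + t.2.2.2 - t.2.1.2 - t.2.2.1 = 0 ∧ t.1.2 + t.2.1.1 - t.2.1.2 - t.2.2.1 = 0

instance : DecidablePred pcond := fun t => by unfold pcond; infer_instance

lemma baseL_nodup : baseL.Nodup := by decide
lemma baseL_len : baseL.length = 15 := by decide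
lemma baseL_gp : ∀ p ∈ baseL, ∀ q ∈ baseL, ∀ r ∈ baseL,
    p ≠ q → p ≠ r → q ≠ r → zdet p q r ≠ 0 := by decide
lemma trisL_len : trisL.length = 29 := by decide
lemma trisL_mem : ∀ t ∈ trisL, t.1 ∈ baseL ∧ t.2.1 ∈ baseL ∧ t.2.2 ∈ baseL := by decide
lemma trisL_distinct : ∀ t ∈ trisL, t.1 ≠ t.2.1 ∧ t.1 ≠ t.2.2 ∧ t.2.1 ≠ t.2.2 := by decide
lemma trisL_pcond : ∀ t ∈ trisL, pcond t := by decide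
lemma trisL_nodup : trisL.Nodup := by decide
lemma trisL_sets_distinct : ∀ t ∈ trisL, ∀ t' ∈ trisL, t ≠ t' →
    ({t.1, t.2.1, t.2.2} : Finset (ℤ × ℤ)) ≠ ({t'.1, t'.2.1, t'.2.2} : Finset (ℤ × ℤ)) := by decide


def GP (Q : Finset ℂ) : Prop :=
  ∀ p ∈ Q, ∀ q ∈ Q, ∀ r ∈ Q, p ≠ q → p ≠ r → q ≠ r → det3 p q r ≠ 0

def IsPlusTri (S : Finset ℂ) : Prop :=
  ∃ x y z : ℂ, x ≠ y ∧ x ≠ z ∧ y ≠ z ∧ S = {x, y, z} ∧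
    x + omega3 * y + omega3 ^ 2 * z = 0

instance : DecidablePred IsPlusTri := fun _ => Classical.dec _

def Tplus (Q : Finset ℂ) : ℕ := (Q.powerset.filter IsPlusTri).card


lemma cross_expand (A B C D : ℂ) (d : ℝ) :
    cross (A + (d : ℂ) * C) (B + (d : ℂ) * D) =
      cross A B + d * (cross A D + cross C B) + d ^ 2 * cross C D := by
  simp only [cross, Complex.add_re, Complex.add_im, Complex.mul_re, Complex.mul_im,
    Complex.ofReal_re, Complex.ofReal_im]
  ring

lemma cross_zero_left (w : ℂ) : cross 0 w = 0 := by simp [cross]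

lemma cross_self_eq (z : ℂ) : cross z z = 0 := by simp [cross]; ring

lemma cross_sub_right (A w w' : ℂ) : cross A (w - w') = cross A w - cross A w' := by
  simp only [cross, Complex.sub_re, Complex.sub_im]; ring

lemma cross_mul_same (u z w : ℂ) :
    cross (u * z) (u * w) = (u.re ^ 2 + u.im ^ 2) * cross z w := by
  simp only [cross, Complex.mul_re, Complex.mul_im]; ring

lemma cross_both_ne (A w : ℂ) (hA : A ≠ 0) (hw : w ≠ 0) :
    ¬(cross A w = 0 ∧ cross A (Complex.I * w) = 0) := by
  rintro ⟨h1, h2⟩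
  simp only [cross, Complex.mul_re, Complex.mul_im, Complex.I_re, Complex.I_im,
    zero_mul, one_mul, zero_sub, add_zero, zero_add] at h1 h2
  have hA' : A.re ≠ 0 ∨ A.im ≠ 0 := by
    by_contra h
    push_neg at h
    exact hA (Complex.ext h.1 h.2)
  have hs : 0 < A.re ^ 2 + A.im ^ 2 := by rcases hA' with h | h <;> positivity
  have hire : w.re * (A.re ^ 2 + A.im ^ 2) = 0 := by linear_combination A.im * h1 - A.re * h2
  have him : w.im * (A.re ^ 2 + A.im ^ 2) = 0 := by linear_combination (-A.re) * h1 - A.im * h2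
  have : w.re = 0 := by
    rcases mul_eq_zero.mp hire with h | h
    · exact h
    · exact absurd h (ne_of_gt hs)
  have : w.im = 0 := by
    rcases mul_eq_zero.mp him with h | h
    · exact h
    · exact absurd h (ne_of_gt hs)
  exact hw (Complex.ext ‹w.re = 0› ‹w.im = 0›)


def baseC : Finset ℂ := baseL.toFinset.image ee
def triC : Finset ((ℤ × ℤ) × (ℤ × ℤ) × (ℤ × ℤ)) := trisL.toFinset

lemma baseC_card : baseC.card = 15 := by
  rw [baseC, Finset.card_image_of_injective _ ee_inj,
    List.toFinset_card_of_nodup baseL_nodup, baseL_len]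

lemma triC_card : triC.card = 29 := by
  rw [triC, List.toFinset_card_of_nodup trisL_nodup, trisL_len]

lemma baseC_gp : ∀ p ∈ baseC, ∀ q ∈ baseC, ∀ r ∈ baseC,
    p ≠ q → p ≠ r → q ≠ r → det3 p q r ≠ 0 := by
  intro p hp q hq r hr hpq hpr hqr
  simp only [baseC, Finset.mem_image, List.mem_toFinset] at hp hq hr
  obtain ⟨a, ha, rfl⟩ := hp
  obtain ⟨b, hb, rfl⟩ := hq
  obtain ⟨c, hc, rfl⟩ := hr
  exact det3_ee_ne (baseL_gp a ha b hb c hc (fun h => hpq (congrArg ee h))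
    (fun h => hpr (congrArg ee h)) (fun h => hqr (congrArg ee h)))

lemma pcond_eq {t : (ℤ × ℤ) × (ℤ × ℤ) × (ℤ × ℤ)} (h : pcond t) :
    ee t.1 + omega3 * ee t.2.1 + omega3 ^ 2 * ee t.2.2 = 0 := by
  obtain ⟨h1, h2⟩ := h
  have c1 : ((t.1.1 + t.2.2.2 - t.2.1.2 - t.2.2.1 : ℤ) : ℂ) = 0 := by rw [h1]; norm_num
  have c2 : ((t.1.2 + t.2.1.1 - t.2.1.2 - t.2.2.1 : ℤ) : ℂ) = 0 := by rw [h2]; norm_num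
  simp only [ee]
  push_cast at c1 c2 ⊢
  linear_combination c1 + omega3 * c2 +
    ((t.2.1.2 : ℂ) + (t.2.2.1 : ℂ) + (t.2.2.2 : ℂ) * (omega3 - 1)) * omega3_sq

lemma plus_rot {x y z : ℂ} (h : x + omega3 * y + omega3 ^ 2 * z = 0) :
    z + omega3 * x + omega3 ^ 2 * y = 0 := by
  linear_combination omega3 * h - z * (omega3 - 1) * omega3_sq


lemma omega3_ne_zero : omega3 ≠ 0 := by
  intro h
  have := omega3_sq
  rw [h] at this
  norm_num at this

lemma cross_zero_right (z : ℂ) : cross z 0 = 0 := by simp [cross]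

lemma cross_neg_eq (z w : ℂ) : cross z w = - cross w z := by simp [cross]; ring

lemma cross_dir (A w : ℂ) (s : ℝ) :
    cross A ((1 + (s : ℂ) * Complex.I) * w) = cross A w + s * cross A (Complex.I * w) := by
  simp only [cross, Complex.add_re, Complex.add_im, Complex.mul_re, Complex.mul_im,
    Complex.ofReal_re, Complex.ofReal_im, Complex.I_re, Complex.I_im, Complex.one_re,
    Complex.one_im]
  ring

lemma plus_distinct {x y z : ℂ} (h : x + omega3 * y + omega3 ^ 2 * z = 0) (hxy : x ≠ y) :
    x ≠ z ∧ y ≠ z := by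
  constructor
  · rintro rfl
    have h2 : omega3 * (y - x) = 0 := by linear_combination h - x * omega3_sq
    rcases mul_eq_zero.mp h2 with h3 | h3
    · exact omega3_ne_zero h3
    · exact hxy (sub_eq_zero.mp h3).symm
  · rintro rfl
    have h2 : x - y = 0 := by linear_combination h - y * omega3_sq
    exact hxy (sub_eq_zero.mp h2)

set_option maxHeartbeats 2000000 in
lemma step (Q : Finset ℂ) (hGP : GP Q) :
    ∃ Q' : Finset ℂ, GP Q' ∧ Q'.card = 15 * Q.card ∧ 102 * Tplus Q ≤ Tplus Q' := by
  classical
  -- ### choice of the direction parameter t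
  have hBadT : (⋃ b ∈ baseC, ⋃ b' ∈ baseC, ⋃ x ∈ Q, ⋃ y ∈ Q,
      {s : ℝ | cross (b' - b) ((1 + (s : ℂ) * Complex.I) * (y - x)) = 0 ∧ b ≠ b' ∧ x ≠ y}).Finite := by
    refine Set.Finite.biUnion baseC.finite_toSet fun b _ => ?_
    refine Set.Finite.biUnion baseC.finite_toSet fun b' _ => ?_
    refine Set.Finite.biUnion Q.finite_toSet fun x _ => ?_
    refine Set.Finite.biUnion Q.finite_toSet fun y _ => ?_
    by_cases hcase : b ≠ b' ∧ x ≠ y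
    · refine (quad_finite (cross (b' - b) (y - x)) (cross (b' - b) (Complex.I * (y - x))) 0
        fun hc => ?_).subset fun s hs => ?_
      · exact cross_both_ne (b' - b) (y - x) (sub_ne_zero.mpr (Ne.symm hcase.1))
          (sub_ne_zero.mpr (Ne.symm hcase.2)) ⟨hc.1, hc.2.1⟩
      · obtain ⟨hs, -⟩ := hs
        rw [cross_dir] at hs
        simp only [Set.mem_setOf_eq]
        linarith
    · refine Set.Finite.subset Set.finite_empty ?_
      rintro s ⟨-, hb, hx⟩
      exact hcase ⟨hb, hx⟩
  obtain ⟨t, -, ht⟩ := exists_avoiding _ hBadT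
  set u : ℂ := 1 + (t : ℂ) * Complex.I with hudef
  have hure : u.re = 1 := by simp [hudef]
  have hu0 : u ≠ 0 := by
    intro h
    rw [h] at hure
    simp at hure
  have hT1 : ∀ b ∈ baseC, ∀ b' ∈ baseC, ∀ x ∈ Q, ∀ y ∈ Q, b ≠ b' → x ≠ y →
      cross (b' - b) (u * (y - x)) ≠ 0 := by
    intro b hb b' hb' x hx y hy hbb hxy hc
    apply ht
    simp only [Set.mem_iUnion]
    exact ⟨b, hb, b', hb', x, hx, y, hy, hc, hbb, hxy⟩
  -- ### choice of the scale parameter δ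
  set P : Finset (ℂ × ℂ) := baseC ×ˢ Q with hPdef
  have hBadD : ((⋃ c₁ ∈ P, ⋃ c₂ ∈ P, ⋃ c₃ ∈ P,
      {d : ℝ | cross ((c₂.1 - c₁.1) + (d : ℂ) * (u * (c₂.2 - c₁.2)))
          ((c₃.1 - c₁.1) + (d : ℂ) * (u * (c₃.2 - c₁.2))) = 0 ∧
        c₁ ≠ c₂ ∧ c₁ ≠ c₃ ∧ c₂ ≠ c₃}) ∪
      (⋃ c₁ ∈ P, ⋃ c₂ ∈ P,
        {d : ℝ | (c₂.1 - c₁.1) + (d : ℂ) * (u * (c₂.2 - c₁.2)) = 0 ∧ c₁.1 ≠ c₂.1})).Finite := by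
    refine Set.Finite.union ?_ ?_
    · refine Set.Finite.biUnion P.finite_toSet fun c₁ hc₁ => ?_
      refine Set.Finite.biUnion P.finite_toSet fun c₂ hc₂ => ?_
      refine Set.Finite.biUnion P.finite_toSet fun c₃ hc₃ => ?_
      rw [Finset.mem_coe, hPdef, Finset.mem_product] at hc₁ hc₂ hc₃
      by_cases hdis : c₁ ≠ c₂ ∧ c₁ ≠ c₃ ∧ c₂ ≠ c₃
      · obtain ⟨h12, h13, h23⟩ := hdis
        refine (quad_finite (cross (c₂.1 - c₁.1) (c₃.1 - c₁.1))
          (cross (c₂.1 - c₁.1) (u * (c₃.2 - c₁.2)) + cross (u * (c₂.2 - c₁.2)) (c₃.1 - c₁.1))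
          (cross (u * (c₂.2 - c₁.2)) (u * (c₃.2 - c₁.2))) ?_).subset fun d hd => ?_
        · rintro ⟨e1, e2, e3⟩
          by_cases hb12 : c₁.1 = c₂.1
          · by_cases hb13 : c₁.1 = c₃.1
            · -- all base points equal: the quadratic coefficient is nonzero
              have hx12 : c₁.2 ≠ c₂.2 := fun h => h12 (Prod.ext_iff.mpr ⟨hb12, h⟩)
              have hx13 : c₁.2 ≠ c₃.2 := fun h => h13 (Prod.ext_iff.mpr ⟨hb13, h⟩)
              have hx23 : c₂.2 ≠ c₃.2 := fun h =>
                h23 (Prod.ext_iff.mpr ⟨hb12.symm.trans hb13, h⟩)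
              rw [cross_mul_same] at e3
              rcases mul_eq_zero.mp e3 with h | h
              · have hpos : (0:ℝ) < u.re ^ 2 + u.im ^ 2 := by rw [hure]; positivity
                exact absurd h (ne_of_gt hpos)
              · exact hGP c₁.2 hc₁.2 c₂.2 hc₂.2 c₃.2 hc₃.2 hx12 hx13 hx23 h
            · -- c₁.1 = c₂.1 ≠ c₃.1 : linear coefficient nonzero
              have hx12 : c₁.2 ≠ c₂.2 := fun h => h12 (Prod.ext_iff.mpr ⟨hb12, h⟩)
              have hA : c₂.1 - c₁.1 = 0 := sub_eq_zero.mpr hb12.symm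
              rw [hA, cross_zero_left, zero_add] at e2
              refine hT1 c₁.1 hc₁.1 c₃.1 hc₃.1 c₁.2 hc₁.2 c₂.2 hc₂.2 hb13 hx12 ?_
              rw [cross_neg_eq] at e2
              linarith [e2]
          · by_cases hb13 : c₁.1 = c₃.1
            · -- c₁.1 = c₃.1 ≠ c₂.1
              have hx13 : c₁.2 ≠ c₃.2 := fun h => h13 (Prod.ext_iff.mpr ⟨hb13, h⟩)
              have hB : c₃.1 - c₁.1 = 0 := sub_eq_zero.mpr hb13.symm
              rw [hB, cross_zero_right, add_zero] at e2
              exact hT1 c₁.1 hc₁.1 c₂.1 hc₂.1 c₁.2 hc₁.2 c₃.2 hc₃.2 hb12 hx13 e2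
            · by_cases hb23 : c₂.1 = c₃.1
              · -- c₂.1 = c₃.1 ≠ c₁.1
                have hx23 : c₂.2 ≠ c₃.2 := fun h => h23 (Prod.ext_iff.mpr ⟨hb23, h⟩)
                have hB : c₃.1 - c₁.1 = c₂.1 - c₁.1 := by rw [hb23]
                rw [hB] at e2
                have e2' : cross (c₂.1 - c₁.1) (u * (c₃.2 - c₁.2) - u * (c₂.2 - c₁.2)) = 0 := by
                  rw [cross_sub_right]
                  rw [cross_neg_eq (u * (c₂.2 - c₁.2)) (c₂.1 - c₁.1)] at e2
                  linarith [e2]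
                have harg : u * (c₃.2 - c₁.2) - u * (c₂.2 - c₁.2) = u * (c₃.2 - c₂.2) := by ring
                rw [harg] at e2'
                exact hT1 c₁.1 hc₁.1 c₂.1 hc₂.1 c₂.2 hc₂.2 c₃.2 hc₃.2 hb12 hx23 e2'
              · -- all base points distinct
                exact baseC_gp c₁.1 hc₁.1 c₂.1 hc₂.1 c₃.1 hc₃.1 hb12 hb13 hb23 e1
        · obtain ⟨hd, -⟩ := hd
          rw [cross_expand] at hd
          simp only [Set.mem_setOf_eq]
          linarith
      · refine Set.Finite.subset Set.finite_empty ?_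
        rintro d ⟨-, hd1, hd2, hd3⟩
        exact hdis ⟨hd1, hd2, hd3⟩
    · refine Set.Finite.biUnion P.finite_toSet fun c₁ hc₁ => ?_
      refine Set.Finite.biUnion P.finite_toSet fun c₂ hc₂ => ?_
      by_cases hbb : c₁.1 = c₂.1
      · refine Set.Finite.subset Set.finite_empty ?_
        rintro d ⟨-, hd⟩
        exact hd hbb
      · refine (lin_finite_c (c₂.1 - c₁.1) (u * (c₂.2 - c₁.2))
          fun hc => ?_).subset fun d hd => hd.1
        exact hbb (sub_eq_zero.mp hc.1).symm

  obtain ⟨δ, hδpos, hδ⟩ := exists_avoiding _ hBadD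
  set ε : ℂ := (δ : ℂ) * u with hεdef
  have hε : ε ≠ 0 := mul_ne_zero (by exact_mod_cast ne_of_gt hδpos) hu0
  have hK1 : ∀ b ∈ baseC, ∀ x ∈ Q, ∀ b' ∈ baseC, ∀ x' ∈ Q,
      b + ε * x = b' + ε * x' → b = b' ∧ x = x' := by
    intro b hb x hx b' hb' x' hx' heq
    by_cases hbb : b = b'
    · subst hbb
      exact ⟨rfl, mul_left_cancel₀ hε (add_left_cancel heq)⟩
    · exfalso
      apply hδ
      refine Set.mem_union_right _ ?_
      simp only [Set.mem_iUnion]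
      refine ⟨(b, x), Finset.mem_product.mpr ⟨hb, hx⟩, (b', x'),
        Finset.mem_product.mpr ⟨hb', hx'⟩, ?_, hbb⟩
      rw [hεdef] at heq
      linear_combination -heq
  have hK2 : ∀ b₁ ∈ baseC, ∀ x₁ ∈ Q, ∀ b₂ ∈ baseC, ∀ x₂ ∈ Q, ∀ b₃ ∈ baseC, ∀ x₃ ∈ Q,
      (b₁, x₁) ≠ (b₂, x₂) → (b₁, x₁) ≠ (b₃, x₃) → (b₂, x₂) ≠ (b₃, x₃) →
      det3 (b₁ + ε * x₁) (b₂ + ε * x₂) (b₃ + ε * x₃) ≠ 0 := by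
    intro b₁ hb₁ x₁ hx₁ b₂ hb₂ x₂ hx₂ b₃ hb₃ x₃ hx₃ h12 h13 h23 hd
    apply hδ
    refine Set.mem_union_left _ ?_
    simp only [Set.mem_iUnion]
    refine ⟨(b₁, x₁), Finset.mem_product.mpr ⟨hb₁, hx₁⟩, (b₂, x₂),
      Finset.mem_product.mpr ⟨hb₂, hx₂⟩, (b₃, x₃), Finset.mem_product.mpr ⟨hb₃, hx₃⟩,
      ?_, h12, h13, h23⟩
    have e2 : (b₂ + ε * x₂) - (b₁ + ε * x₁) = (b₂ - b₁) + (δ : ℂ) * (u * (x₂ - x₁)) := by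
      rw [hεdef]; ring
    have e3 : (b₃ + ε * x₃) - (b₁ + ε * x₁) = (b₃ - b₁) + (δ : ℂ) * (u * (x₃ - x₁)) := by
      rw [hεdef]; ring
    rw [det3, e2, e3] at hd
    exact hd
  -- ### the new configuration
  set Q' : Finset ℂ := baseC.biUnion (fun b => Q.image (fun x => b + ε * x)) with hQ'def
  have hmem' : ∀ {z : ℂ}, z ∈ Q' ↔ ∃ b, b ∈ baseC ∧ ∃ x, x ∈ Q ∧ z = b + ε * x := by
    intro z
    simp only [hQ'def, Finset.mem_biUnion, Finset.mem_image]
    constructor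
    · rintro ⟨b, hb, x, hx, rfl⟩
      exact ⟨b, hb, x, hx, rfl⟩
    · rintro ⟨b, hb, x, hx, rfl⟩
      exact ⟨b, hb, x, hx, rfl⟩
  have hGP' : GP Q' := by
    intro p hp q hq r hr hpq hpr hqr
    obtain ⟨b₁, hb₁, x₁, hx₁, rfl⟩ := hmem'.mp hp
    obtain ⟨b₂, hb₂, x₂, hx₂, rfl⟩ := hmem'.mp hq
    obtain ⟨b₃, hb₃, x₃, hx₃, rfl⟩ := hmem'.mp hr
    refine hK2 b₁ hb₁ x₁ hx₁ b₂ hb₂ x₂ hx₂ b₃ hb₃ x₃ hx₃ ?_ ?_ ?_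
    · rintro h; simp only [Prod.mk.injEq] at h; exact hpq (by rw [h.1, h.2])
    · rintro h; simp only [Prod.mk.injEq] at h; exact hpr (by rw [h.1, h.2])
    · rintro h; simp only [Prod.mk.injEq] at h; exact hqr (by rw [h.1, h.2])
  have hinj : ∀ b : ℂ, Function.Injective (fun x : ℂ => b + ε * x) := by
    intro b a a' h
    exact mul_left_cancel₀ hε (add_left_cancel h)
  have hcard' : Q'.card = 15 * Q.card := by
    rw [hQ'def, Finset.card_biUnion]
    · rw [Finset.sum_congr rfl (fun b _ => Finset.card_image_of_injective Q (hinj b)),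
        Finset.sum_const, smul_eq_mul, baseC_card]
    · intro b hb b' hb' hbb
      simp only [Finset.disjoint_left, Finset.mem_image]
      rintro z ⟨x, hx, rfl⟩ ⟨x', hx', heq⟩
      exact hbb ((hK1 b' hb' x' hx' b hb x hx heq).1).symm
  refine ⟨Q', hGP', hcard', ?_⟩
  -- ### counting plus triangles
  have hTp : Tplus Q = (Q.powerset.filter IsPlusTri).card := rfl
  set F : Finset (Finset ℂ) := Q.powerset.filter IsPlusTri with hFdef
  set Sol : Finset (ℂ × ℂ × ℂ) := (Q ×ˢ Q ×ˢ Q).filter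
    (fun a => a.1 + omega3 * a.2.1 + omega3 ^ 2 * a.2.2 = 0 ∧ a.1 ≠ a.2.1) with hSoldef
  have hSolmem : ∀ a ∈ Sol, a.1 ∈ Q ∧ a.2.1 ∈ Q ∧ a.2.2 ∈ Q ∧
      a.1 + omega3 * a.2.1 + omega3 ^ 2 * a.2.2 = 0 ∧ a.1 ≠ a.2.1 := by
    intro a ha
    rw [hSoldef, Finset.mem_filter, Finset.mem_product] at ha
    obtain ⟨⟨h1, h2⟩, h3, h4⟩ := ha
    rw [Finset.mem_product] at h2
    exact ⟨h1, h2.1, h2.2, h3, h4⟩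
  have hFmem : ∀ S ∈ F, S ⊆ Q ∧ IsPlusTri S := by
    intro S hS
    rw [hFdef, Finset.mem_filter, Finset.mem_powerset] at hS
    exact hS
  -- each plus triangle of Q has at least 3 ordered representatives in Sol
  have hSol3 : 3 * F.card ≤ Sol.card := by
    set s' := Sol.filter (fun a : ℂ × ℂ × ℂ => ({a.1, a.2.1, a.2.2} : Finset ℂ) ∈ F) with hs'def
    have hmaps : ∀ a ∈ s', ({a.1, a.2.1, a.2.2} : Finset ℂ) ∈ F :=
      fun a ha => (Finset.mem_filter.mp ha).2
    have hcf := Finset.card_eq_sum_card_fiberwise hmaps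
    have hfib : ∀ S ∈ F, 3 ≤ (s'.filter
        (fun a : ℂ × ℂ × ℂ => ({a.1, a.2.1, a.2.2} : Finset ℂ) = S)).card := by
      intro S hS
      have hSsub := (hFmem S hS).1
      obtain ⟨x, y, z, hxy, hxz, hyz, hSeq, heq⟩ := (hFmem S hS).2
      have hxQ : x ∈ Q := hSsub (by rw [hSeq]; simp)
      have hyQ : y ∈ Q := hSsub (by rw [hSeq]; simp)
      have hzQ : z ∈ Q := hSsub (by rw [hSeq]; simp)
      have h2 : z + omega3 * x + omega3 ^ 2 * y = 0 := plus_rot heq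
      have h3 : y + omega3 * z + omega3 ^ 2 * x = 0 := plus_rot h2
      have hsub3 : ({(x, y, z), (y, z, x), (z, x, y)} : Finset (ℂ × ℂ × ℂ)) ⊆
          s'.filter (fun a : ℂ × ℂ × ℂ => ({a.1, a.2.1, a.2.2} : Finset ℂ) = S) := by
        intro a ha
        simp only [Finset.mem_insert, Finset.mem_singleton] at ha
        have hset1 : ({y, z, x} : Finset ℂ) = {x, y, z} := by
          ext w; simp only [Finset.mem_insert, Finset.mem_singleton]; tauto
        have hset2 : ({z, x, y} : Finset ℂ) = {x, y, z} := by
          ext w; simp only [Finset.mem_insert, Finset.mem_singleton]; tauto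
        rcases ha with rfl | rfl | rfl <;>
          rw [Finset.mem_filter, hs'def, Finset.mem_filter, hSoldef, Finset.mem_filter,
            Finset.mem_product, Finset.mem_product]
        · exact ⟨⟨⟨⟨hxQ, hyQ, hzQ⟩, heq, hxy⟩, by rw [← hSeq]; exact hS⟩, hSeq.symm⟩
        · exact ⟨⟨⟨⟨hyQ, hzQ, hxQ⟩, h3, hyz⟩, by rw [hset1, ← hSeq]; exact hS⟩,
            by rw [hset1, ← hSeq]⟩
        · exact ⟨⟨⟨⟨hzQ, hxQ, hyQ⟩, h2, fun h => hxz h.symm⟩, by rw [hset2, ← hSeq]; exact hS⟩,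
            by rw [hset2, ← hSeq]⟩
      refine le_trans (le_of_eq ?_) (Finset.card_le_card hsub3)
      rw [Finset.card_insert_of_notMem, Finset.card_insert_of_notMem, Finset.card_singleton]
      · intro hmem
        rw [Finset.mem_singleton] at hmem
        exact hyz (congrArg (fun p => p.1) hmem)
      · intro hmem
        rw [Finset.mem_insert, Finset.mem_singleton] at hmem
        rcases hmem with h | h
        · exact hxy (congrArg (fun p => p.1) h)
        · exact hxz (congrArg (fun p => p.1) h)
    calc 3 * F.card = ∑ _S ∈ F, 3 := by rw [Finset.sum_const, smul_eq_mul, mul_comm]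
    _ ≤ ∑ S ∈ F, (s'.filter
        (fun a : ℂ × ℂ × ℂ => ({a.1, a.2.1, a.2.2} : Finset ℂ) = S)).card :=
      Finset.sum_le_sum hfib
    _ = s'.card := hcf.symm
    _ ≤ Sol.card := Finset.card_le_card (Finset.filter_subset _ _)
  -- the within-copy triangles
  set S1 : Finset (Finset ℂ) := (baseC ×ˢ F).image
      (fun bs : ℂ × Finset ℂ => bs.2.image (fun x => bs.1 + ε * x)) with hS1def
  have hS1card : S1.card = 15 * F.card := by
    rw [hS1def, Finset.card_image_of_injOn, Finset.card_product, baseC_card]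
    rintro ⟨b, S⟩ hbs ⟨b', S'⟩ hbs' heqim
    rw [Finset.mem_coe, Finset.mem_product] at hbs hbs'
    simp only at heqim
    have hSsub := (hFmem S hbs.2).1
    obtain ⟨x, y, z, hxy, hxz, hyz, hSeq, heq⟩ := (hFmem S hbs.2).2
    have hxS : x ∈ S := by rw [hSeq]; simp
    have hmem1 : b + ε * x ∈ S'.image (fun x => b' + ε * x) := by
      rw [← heqim]
      exact Finset.mem_image_of_mem _ hxS
    obtain ⟨x', hx'S', hx'eq⟩ := Finset.mem_image.mp hmem1
    have hbb' : b = b' ∧ x = x' :=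
      ⟨((hK1 b' hbs'.1 x' ((hFmem S' hbs'.2).1 hx'S') b hbs.1 x (hSsub hxS) hx'eq).1).symm,
       ((hK1 b' hbs'.1 x' ((hFmem S' hbs'.2).1 hx'S') b hbs.1 x (hSsub hxS) hx'eq).2).symm⟩
    have hSS' : S = S' := by
      apply Finset.image_injective (hinj b)
      rw [heqim, hbb'.1]
    rw [Prod.mk.injEq]
    exact ⟨hbb'.1, hSS'⟩
  have hS1sub : S1 ⊆ Q'.powerset.filter IsPlusTri := by
    intro E hE
    obtain ⟨⟨b, S⟩, hbs, rfl⟩ := Finset.mem_image.mp hE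
    rw [Finset.mem_product] at hbs
    have hSsub := (hFmem S hbs.2).1
    obtain ⟨x, y, z, hxy, hxz, hyz, hSeq, heq⟩ := (hFmem S hbs.2).2
    rw [Finset.mem_filter, Finset.mem_powerset]
    constructor
    · intro w hw
      obtain ⟨x', hx', rfl⟩ := Finset.mem_image.mp hw
      exact hmem'.mpr ⟨b, hbs.1, x', hSsub hx', rfl⟩
    · refine ⟨b + ε * x, b + ε * y, b + ε * z, fun h => hxy (hinj b h),
        fun h => hxz (hinj b h), fun h => hyz (hinj b h), ?_, ?_⟩
      · simp only [hSeq, Finset.image_insert, Finset.image_singleton]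
      · linear_combination ε * heq + b * omega3_sq
  -- facts about the 29 base triangles
  have htriC : ∀ T ∈ triC, (ee T.1 ∈ baseC ∧ ee T.2.1 ∈ baseC ∧ ee T.2.2 ∈ baseC) ∧
      (ee T.1 ≠ ee T.2.1 ∧ ee T.1 ≠ ee T.2.2 ∧ ee T.2.1 ≠ ee T.2.2) ∧
      ee T.1 + omega3 * ee T.2.1 + omega3 ^ 2 * ee T.2.2 = 0 := by
    intro T hT
    rw [triC, List.mem_toFinset] at hT
    obtain ⟨m1, m2, m3⟩ := trisL_mem T hT
    obtain ⟨d1, d2, d3⟩ := trisL_distinct T hT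
    refine ⟨⟨?_, ?_, ?_⟩, ⟨fun h => d1 (ee_inj h), fun h => d2 (ee_inj h),
      fun h => d3 (ee_inj h)⟩, pcond_eq (trisL_pcond T hT)⟩ <;>
      simp only [baseC] <;> exact Finset.mem_image_of_mem _ (List.mem_toFinset.mpr ‹_›)
  -- the cross-copy triangles
  set S2 : Finset (Finset ℂ) := (triC ×ˢ Sol).image
      (fun p : ((ℤ × ℤ) × (ℤ × ℤ) × (ℤ × ℤ)) × ℂ × ℂ × ℂ =>
        ({ee p.1.1 + ε * p.2.1, ee p.1.2.1 + ε * p.2.2.1, ee p.1.2.2 + ε * p.2.2.2} :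
          Finset ℂ)) with hS2def
  have hS2card : S2.card = 29 * Sol.card := by
    rw [hS2def, Finset.card_image_of_injOn, Finset.card_product, triC_card]
    rintro ⟨T, a⟩ hTa ⟨T', a'⟩ hTa' heqim
    rw [Finset.mem_coe, Finset.mem_product] at hTa hTa'
    simp only at heqim
    obtain ⟨⟨hb1, hb2, hb3⟩, ⟨hd1, hd2, hd3⟩, -⟩ := htriC T hTa.1
    obtain ⟨⟨hb1', hb2', hb3'⟩, ⟨hd1', hd2', hd3'⟩, -⟩ := htriC T' hTa'.1
    obtain ⟨ha1, ha2, ha3, -, -⟩ := hSolmem a hTa.2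
    obtain ⟨ha1', ha2', ha3', -, -⟩ := hSolmem a' hTa'.2
    -- the base triangles agree
    have hbase : ({ee T.1, ee T.2.1, ee T.2.2} : Finset ℂ) =
        ({ee T'.1, ee T'.2.1, ee T'.2.2} : Finset ℂ) := by
      apply Finset.Subset.antisymm
      · intro w hw
        simp only [Finset.mem_insert, Finset.mem_singleton] at hw ⊢
        rcases hw with rfl | rfl | rfl
        · have : ee T.1 + ε * a.1 ∈ ({ee T'.1 + ε * a'.1, ee T'.2.1 + ε * a'.2.1,
              ee T'.2.2 + ε * a'.2.2} : Finset ℂ) := by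
            rw [← heqim]; simp
          simp only [Finset.mem_insert, Finset.mem_singleton] at this
          rcases this with h | h | h
          · exact Or.inl (hK1 _ hb1 _ ha1 _ hb1' _ ha1' h).1
          · exact Or.inr (Or.inl (hK1 _ hb1 _ ha1 _ hb2' _ ha2' h).1)
          · exact Or.inr (Or.inr (hK1 _ hb1 _ ha1 _ hb3' _ ha3' h).1)
        · have : ee T.2.1 + ε * a.2.1 ∈ ({ee T'.1 + ε * a'.1, ee T'.2.1 + ε * a'.2.1,
              ee T'.2.2 + ε * a'.2.2} : Finset ℂ) := by
            rw [← heqim]; simp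
          simp only [Finset.mem_insert, Finset.mem_singleton] at this
          rcases this with h | h | h
          · exact Or.inl (hK1 _ hb2 _ ha2 _ hb1' _ ha1' h).1
          · exact Or.inr (Or.inl (hK1 _ hb2 _ ha2 _ hb2' _ ha2' h).1)
          · exact Or.inr (Or.inr (hK1 _ hb2 _ ha2 _ hb3' _ ha3' h).1)
        · have : ee T.2.2 + ε * a.2.2 ∈ ({ee T'.1 + ε * a'.1, ee T'.2.1 + ε * a'.2.1,
              ee T'.2.2 + ε * a'.2.2} : Finset ℂ) := by
            rw [← heqim]; simp
          simp only [Finset.mem_insert, Finset.mem_singleton] at this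
          rcases this with h | h | h
          · exact Or.inl (hK1 _ hb3 _ ha3 _ hb1' _ ha1' h).1
          · exact Or.inr (Or.inl (hK1 _ hb3 _ ha3 _ hb2' _ ha2' h).1)
          · exact Or.inr (Or.inr (hK1 _ hb3 _ ha3 _ hb3' _ ha3' h).1)
      · intro w hw
        simp only [Finset.mem_insert, Finset.mem_singleton] at hw ⊢
        rcases hw with rfl | rfl | rfl
        · have : ee T'.1 + ε * a'.1 ∈ ({ee T.1 + ε * a.1, ee T.2.1 + ε * a.2.1,
              ee T.2.2 + ε * a.2.2} : Finset ℂ) := by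
            rw [heqim]; simp
          simp only [Finset.mem_insert, Finset.mem_singleton] at this
          rcases this with h | h | h
          · exact Or.inl (hK1 _ hb1' _ ha1' _ hb1 _ ha1 h).1
          · exact Or.inr (Or.inl (hK1 _ hb1' _ ha1' _ hb2 _ ha2 h).1)
          · exact Or.inr (Or.inr (hK1 _ hb1' _ ha1' _ hb3 _ ha3 h).1)
        · have : ee T'.2.1 + ε * a'.2.1 ∈ ({ee T.1 + ε * a.1, ee T.2.1 + ε * a.2.1,
              ee T.2.2 + ε * a.2.2} : Finset ℂ) := by
            rw [heqim]; simp
          simp only [Finset.mem_insert, Finset.mem_singleton] at this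
          rcases this with h | h | h
          · exact Or.inl (hK1 _ hb2' _ ha2' _ hb1 _ ha1 h).1
          · exact Or.inr (Or.inl (hK1 _ hb2' _ ha2' _ hb2 _ ha2 h).1)
          · exact Or.inr (Or.inr (hK1 _ hb2' _ ha2' _ hb3 _ ha3 h).1)
        · have : ee T'.2.2 + ε * a'.2.2 ∈ ({ee T.1 + ε * a.1, ee T.2.1 + ε * a.2.1,
              ee T.2.2 + ε * a.2.2} : Finset ℂ) := by
            rw [heqim]; simp
          simp only [Finset.mem_insert, Finset.mem_singleton] at this
          rcases this with h | h | h
          · exact Or.inl (hK1 _ hb3' _ ha3' _ hb1 _ ha1 h).1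
          · exact Or.inr (Or.inl (hK1 _ hb3' _ ha3' _ hb2 _ ha2 h).1)
          · exact Or.inr (Or.inr (hK1 _ hb3' _ ha3' _ hb3 _ ha3 h).1)
    -- hence the integer triangles agree
    have hTT' : T = T' := by
      by_contra hne
      apply trisL_sets_distinct T (List.mem_toFinset.mp (by rw [← triC]; exact hTa.1)) T'
        (List.mem_toFinset.mp (by rw [← triC]; exact hTa'.1)) hne
      apply Finset.image_injective ee_inj
      simpa only [Finset.image_insert, Finset.image_singleton] using hbase
    subst hTT'
    -- and then the solution triples agree
    have hpt1 : ee T.1 + ε * a.1 ∈ ({ee T.1 + ε * a'.1, ee T.2.1 + ε * a'.2.1,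
        ee T.2.2 + ε * a'.2.2} : Finset ℂ) := by rw [← heqim]; simp
    have hpt2 : ee T.2.1 + ε * a.2.1 ∈ ({ee T.1 + ε * a'.1, ee T.2.1 + ε * a'.2.1,
        ee T.2.2 + ε * a'.2.2} : Finset ℂ) := by rw [← heqim]; simp
    have hpt3 : ee T.2.2 + ε * a.2.2 ∈ ({ee T.1 + ε * a'.1, ee T.2.1 + ε * a'.2.1,
        ee T.2.2 + ε * a'.2.2} : Finset ℂ) := by rw [← heqim]; simp
    simp only [Finset.mem_insert, Finset.mem_singleton] at hpt1 hpt2 hpt3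
    have he1 : a.1 = a'.1 := by
      rcases hpt1 with h | h | h
      · exact (hK1 _ hb1 _ ha1 _ hb1 _ ha1' h).2
      · exact absurd (hK1 _ hb1 _ ha1 _ hb2 _ ha2' h).1 hd1
      · exact absurd (hK1 _ hb1 _ ha1 _ hb3 _ ha3' h).1 hd2
    have he2 : a.2.1 = a'.2.1 := by
      rcases hpt2 with h | h | h
      · exact absurd (hK1 _ hb2 _ ha2 _ hb1 _ ha1' h).1 (Ne.symm hd1)
      · exact (hK1 _ hb2 _ ha2 _ hb2 _ ha2' h).2
      · exact absurd (hK1 _ hb2 _ ha2 _ hb3 _ ha3' h).1 hd3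
    have he3 : a.2.2 = a'.2.2 := by
      rcases hpt3 with h | h | h
      · exact absurd (hK1 _ hb3 _ ha3 _ hb1 _ ha1' h).1 (Ne.symm hd2)
      · exact absurd (hK1 _ hb3 _ ha3 _ hb2 _ ha2' h).1 (Ne.symm hd3)
      · exact (hK1 _ hb3 _ ha3 _ hb3 _ ha3' h).2
    exact Prod.ext_iff.mpr ⟨rfl, Prod.ext_iff.mpr ⟨he1, Prod.ext_iff.mpr ⟨he2, he3⟩⟩⟩
  have hS2sub : S2 ⊆ Q'.powerset.filter IsPlusTri := by
    intro E hE
    obtain ⟨⟨T, a⟩, hTa, rfl⟩ := Finset.mem_image.mp hE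
    rw [Finset.mem_product] at hTa
    obtain ⟨⟨hb1, hb2, hb3⟩, ⟨hd1, hd2, hd3⟩, hbeq⟩ := htriC T hTa.1
    obtain ⟨ha1, ha2, ha3, haeq, -⟩ := hSolmem a hTa.2
    rw [Finset.mem_filter, Finset.mem_powerset]
    constructor
    · intro w hw
      simp only [Finset.mem_insert, Finset.mem_singleton] at hw
      rcases hw with rfl | rfl | rfl
      · exact hmem'.mpr ⟨_, hb1, _, ha1, rfl⟩
      · exact hmem'.mpr ⟨_, hb2, _, ha2, rfl⟩
      · exact hmem'.mpr ⟨_, hb3, _, ha3, rfl⟩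
    · refine ⟨ee T.1 + ε * a.1, ee T.2.1 + ε * a.2.1, ee T.2.2 + ε * a.2.2,
        fun h => hd1 (hK1 _ hb1 _ ha1 _ hb2 _ ha2 h).1,
        fun h => hd2 (hK1 _ hb1 _ ha1 _ hb3 _ ha3 h).1,
        fun h => hd3 (hK1 _ hb2 _ ha2 _ hb3 _ ha3 h).1, rfl, ?_⟩
      linear_combination hbeq + ε * haeq
  -- the two families are disjoint
  have hdisj : Disjoint S1 S2 := by
    rw [Finset.disjoint_left]
    rintro E hE1 hE2
    obtain ⟨⟨b, S⟩, hbs, rfl⟩ := Finset.mem_image.mp hE1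
    rw [Finset.mem_product] at hbs
    obtain ⟨⟨T, a⟩, hTa, heqim⟩ := Finset.mem_image.mp hE2
    rw [Finset.mem_product] at hTa
    obtain ⟨⟨hb1, hb2, hb3⟩, ⟨hd1, hd2, hd3⟩, -⟩ := htriC T hTa.1
    obtain ⟨ha1, ha2, ha3, -, -⟩ := hSolmem a hTa.2
    have hSsub := (hFmem S hbs.2).1
    simp only at heqim
    have hpt1 : ee T.1 + ε * a.1 ∈ S.image (fun x => b + ε * x) := by rw [← heqim]; simp
    have hpt2 : ee T.2.1 + ε * a.2.1 ∈ S.image (fun x => b + ε * x) := by rw [← heqim]; simp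
    obtain ⟨x1, hx1, hx1e⟩ := Finset.mem_image.mp hpt1
    obtain ⟨x2, hx2, hx2e⟩ := Finset.mem_image.mp hpt2
    have g1 := (hK1 _ hbs.1 _ (hSsub hx1) _ hb1 _ ha1 hx1e).1
    have g2 := (hK1 _ hbs.1 _ (hSsub hx2) _ hb2 _ ha2 hx2e).1
    exact hd1 (g1 ▸ g2 ▸ rfl)
  -- put everything together
  calc 102 * Tplus Q = 15 * F.card + 29 * (3 * F.card) := by rw [hTp]; ring
  _ ≤ 15 * F.card + 29 * Sol.card := by
      exact Nat.add_le_add_left (Nat.mul_le_mul_left 29 hSol3) _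
  _ = S1.card + S2.card := by rw [hS1card, hS2card]
  _ = (S1 ∪ S2).card := (Finset.card_union_of_disjoint hdisj).symm
  _ ≤ (Q'.powerset.filter IsPlusTri).card :=
      Finset.card_le_card (Finset.union_subset hS1sub hS2sub)
  _ = Tplus Q' := rfl



-- ### base configuration count
lemma base_count : 29 ≤ Tplus baseC := by
  classical
  have htriC : ∀ T ∈ triC, (ee T.1 ∈ baseC ∧ ee T.2.1 ∈ baseC ∧ ee T.2.2 ∈ baseC) ∧
      (ee T.1 ≠ ee T.2.1 ∧ ee T.1 ≠ ee T.2.2 ∧ ee T.2.1 ≠ ee T.2.2) ∧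
      ee T.1 + omega3 * ee T.2.1 + omega3 ^ 2 * ee T.2.2 = 0 := by
    intro T hT
    rw [triC, List.mem_toFinset] at hT
    obtain ⟨m1, m2, m3⟩ := trisL_mem T hT
    obtain ⟨d1, d2, d3⟩ := trisL_distinct T hT
    refine ⟨⟨?_, ?_, ?_⟩, ⟨fun h => d1 (ee_inj h), fun h => d2 (ee_inj h),
      fun h => d3 (ee_inj h)⟩, pcond_eq (trisL_pcond T hT)⟩ <;>
      simp only [baseC] <;> exact Finset.mem_image_of_mem _ (List.mem_toFinset.mpr ‹_›)
  set S0 : Finset (Finset ℂ) := triC.image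
    (fun T => ({ee T.1, ee T.2.1, ee T.2.2} : Finset ℂ)) with hS0
  have hcard : S0.card = 29 := by
    rw [hS0, Finset.card_image_of_injOn, triC_card]
    intro T hT T' hT' heqim
    by_contra hne
    apply trisL_sets_distinct T (List.mem_toFinset.mp (by rw [← triC]; exact hT)) T'
      (List.mem_toFinset.mp (by rw [← triC]; exact hT')) hne
    apply Finset.image_injective ee_inj
    simpa only [Finset.image_insert, Finset.image_singleton] using heqim
  have hsub : S0 ⊆ baseC.powerset.filter IsPlusTri := by
    intro E hE
    obtain ⟨T, hT, rfl⟩ := Finset.mem_image.mp hE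
    obtain ⟨⟨hb1, hb2, hb3⟩, ⟨hd1, hd2, hd3⟩, hbeq⟩ := htriC T hT
    rw [Finset.mem_filter, Finset.mem_powerset]
    refine ⟨?_, ee T.1, ee T.2.1, ee T.2.2, hd1, hd2, hd3, rfl, hbeq⟩
    intro w hw
    simp only [Finset.mem_insert, Finset.mem_singleton] at hw
    rcases hw with rfl | rfl | rfl <;> assumption
  calc (29:ℕ) = S0.card := hcard.symm
  _ ≤ (baseC.powerset.filter IsPlusTri).card := Finset.card_le_card hsub
  _ = Tplus baseC := rfl

-- ### padding
lemma det3_cyc (p q r : ℂ) : det3 p q r = det3 q r p := by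
  simp only [det3, cross, Complex.sub_re, Complex.sub_im]; ring

lemma cross_parab (A x : ℂ) (s : ℝ) :
    cross A ((s : ℂ) + (s : ℂ) ^ 2 * Complex.I - x) =
      cross A (-x) + s * A.im + s ^ 2 * (-A.re) := by
  simp only [cross, Complex.add_re, Complex.add_im, Complex.sub_re, Complex.sub_im,
    Complex.mul_re, Complex.mul_im, Complex.ofReal_re, Complex.ofReal_im, Complex.I_re,
    Complex.I_im, Complex.neg_re, Complex.neg_im, pow_two]
  ring

lemma pad (Q : Finset ℂ) (hGP : GP Q) : ∃ w : ℂ, w ∉ Q ∧ GP (insert w Q) := by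
  classical
  have hBad : ((⋃ x ∈ Q, ⋃ y ∈ Q,
      {s : ℝ | cross (y - x) ((s : ℂ) + (s : ℂ) ^ 2 * Complex.I - x) = 0 ∧ x ≠ y}) ∪
      (⋃ x ∈ Q, {s : ℝ | (s : ℂ) + (s : ℂ) ^ 2 * Complex.I = x})).Finite := by
    refine Set.Finite.union ?_ ?_
    · refine Set.Finite.biUnion Q.finite_toSet fun x _ => ?_
      refine Set.Finite.biUnion Q.finite_toSet fun y _ => ?_
      by_cases hxy : x ≠ y
      · refine (quad_finite (cross (y - x) (-x)) ((y - x).im) (-(y - x).re)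
          fun hc => ?_).subset fun s hs => ?_
        · exact sub_ne_zero.mpr (Ne.symm hxy)
            (Complex.ext (neg_eq_zero.mp hc.2.2) hc.2.1)
        · obtain ⟨hs, -⟩ := hs
          rw [cross_parab] at hs
          simp only [Set.mem_setOf_eq]
          linarith
      · refine Set.Finite.subset Set.finite_empty ?_
        rintro s ⟨-, h⟩
        exact hxy h
    · refine Set.Finite.biUnion Q.finite_toSet fun x _ => ?_
      refine Set.Finite.subset (Set.finite_singleton x.re) fun s hs => ?_
      simp only [Set.mem_setOf_eq] at hs
      have := congrArg Complex.re hs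
      simp only [Complex.add_re, Complex.mul_re, Complex.ofReal_re, Complex.ofReal_im,
        Complex.I_re, Complex.I_im, pow_two, Complex.mul_im] at this
      simp only [Set.mem_singleton_iff]
      linarith
  obtain ⟨s, -, hs⟩ := exists_avoiding _ hBad
  refine ⟨(s : ℂ) + (s : ℂ) ^ 2 * Complex.I, fun hw => ?_, ?_⟩
  · exact hs (Set.mem_union_right _ (by
      simp only [Set.mem_iUnion]
      exact ⟨_, hw, rfl⟩))
  · have hdet : ∀ x ∈ Q, ∀ y ∈ Q, x ≠ y →
        det3 x y ((s : ℂ) + (s : ℂ) ^ 2 * Complex.I) ≠ 0 := by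
      intro x hx y hy hxy h0
      apply hs
      refine Set.mem_union_left _ ?_
      simp only [Set.mem_iUnion]
      exact ⟨x, hx, y, hy, h0, hxy⟩
    intro p hp q hq r hr hpq hpr hqr
    rcases Finset.mem_insert.mp hp with rfl | hp <;>
      rcases Finset.mem_insert.mp hq with rfl | hq <;>
      rcases Finset.mem_insert.mp hr with rfl | hr
    · exact absurd rfl hpq
    · exact absurd rfl hpq
    · exact absurd rfl hpr
    · rw [det3_cyc]
      exact hdet q hq r hr hqr
    · exact absurd rfl hqr
    · rw [det3_cyc, det3_cyc]
      exact hdet r hr p hp (Ne.symm hpr)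
    · exact hdet p hp q hq hpq
    · exact hGP p hp q hq r hr hpq hpr hqr

-- ### iterated construction
lemma grow : ∀ k : ℕ, ∃ Q : Finset ℂ, GP Q ∧ Q.card = 15 ^ (k + 1) ∧
    29 * 102 ^ k ≤ Tplus Q := by
  intro k
  induction k with
  | zero =>
    refine ⟨baseC, baseC_gp, by rw [baseC_card]; norm_num, by simpa using base_count⟩
  | succ k ih =>
    obtain ⟨Q, hGPQ, hcard, hT⟩ := ih
    obtain ⟨Q', hGP', hcard', hT'⟩ := step Q hGPQ
    refine ⟨Q', hGP', by rw [hcard', hcard]; ring, ?_⟩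
    calc 29 * 102 ^ (k + 1) = 102 * (29 * 102 ^ k) := by ring
    _ ≤ 102 * Tplus Q := Nat.mul_le_mul_left _ hT
    _ ≤ Tplus Q' := hT'

lemma padMany : ∀ (j : ℕ) (Q : Finset ℂ), GP Q →
    ∃ Q', GP Q' ∧ Q'.card = Q.card + j ∧ Tplus Q ≤ Tplus Q' := by
  intro j
  induction j with
  | zero => exact fun Q h => ⟨Q, h, rfl, le_rfl⟩
  | succ j ih =>
    intro Q hQ
    obtain ⟨Q1, hQ1, hc1, hT1⟩ := ih Q hQ
    obtain ⟨w, hw, hGPw⟩ := pad Q1 hQ1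
    refine ⟨insert w Q1, hGPw, by rw [Finset.card_insert_of_notMem hw, hc1]; omega, ?_⟩
    refine le_trans hT1 (Finset.card_le_card (Finset.filter_subset_filter _ ?_))
    exact Finset.powerset_mono.mpr (Finset.subset_insert _ _)

-- ### plus triangles are similar copies of triEq
lemma isPlusTri_similar {S : Finset ℂ} (h : IsPlusTri S) : IsSimilarCopy triEq S := by
  obtain ⟨x, y, z, hxy, hxz, hyz, hSeq, heq⟩ := h
  have hω1 : omega3 - 1 ≠ 0 := sub_ne_zero.mpr omega3_ne_one
  set c : ℂ := (x - z) / (omega3 - 1) with hc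
  refine ⟨c, z - c, div_ne_zero (sub_ne_zero.mpr hxz) hω1, ?_⟩
  have htri : (triEq : Set ℂ) = {1, omega3, omega3 ^ 2} := by
    simp [triEq]
  rw [htri, Set.image_insert_eq, Set.image_insert_eq, Set.image_singleton]
  have e1 : c * 1 + (z - c) = z := by ring
  have e2 : c * omega3 + (z - c) = x := by
    rw [hc]; field_simp; ring
  have e3' : (y - z) * (omega3 - 1) = (x - z) * (omega3 ^ 2 - 1) := by
    linear_combination (2 + omega3) * heq - (x + y + z * omega3) * omega3_sq
  have key : (x - z) / (omega3 - 1) * (omega3 ^ 2 - 1) = y - z := by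
    rw [div_mul_eq_mul_div, ← e3']
    exact mul_div_cancel_right₀ _ hω1
  have e3 : c * omega3 ^ 2 + (z - c) = y := by
    rw [hc]; linear_combination key
  rw [e1, e2, e3, hSeq]
  ext w
  simp only [Finset.coe_insert, Finset.coe_singleton, Set.mem_insert_iff,
    Set.mem_singleton_iff]
  tauto

-- ### from GP to NoMOnLine
lemma gp_noM {Q : Finset ℂ} (h : GP Q) : NoMOnLine 3 Q := by
  intro S hS hcol
  by_contra hcon
  push_neg at hcon
  have h2 : 2 < S.card := by omega
  obtain ⟨x, hx, y, hy, z, hz, hxy, hxz, hyz⟩ := Finset.two_lt_card.mp h2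
  have hsub : ({x, y, z} : Set ℂ) ⊆ (S : Set ℂ) := by
    intro w hw
    rcases hw with rfl | rfl | rfl <;> simpa
  exact h x (hS hx) y (hS hy) z (hS hz) hxy hxz hyz (collinear_det3 (hcol.subset hsub))

lemma tplus_le_SP (Q : Finset ℂ) : Tplus Q ≤ SP triEq Q := by
  classical
  unfold Tplus SP
  apply Finset.card_le_card
  intro S hS
  rw [Finset.mem_filter] at hS ⊢
  exact ⟨hS.1, isPlusTri_similar hS.2⟩

lemma SP_le_SPnm {n : ℕ} {Q : Finset ℂ} (hc : Q.card = n) (hGP : GP Q) :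
    SP triEq Q ≤ SPnm triEq n 3 := by
  classical
  apply le_csSup
  · refine ⟨2 ^ n, ?_⟩
    rintro k ⟨Q₀, hc₀, -, rfl⟩
    unfold SP
    calc (Q₀.powerset.filter (IsSimilarCopy triEq)).card ≤ Q₀.powerset.card :=
      Finset.card_filter_le _ _
    _ = 2 ^ n := by rw [Finset.card_powerset, hc₀]
  · exact ⟨Q, hc, gp_noM hGP, rfl⟩



/-- For the equilateral triangle `△ = {1, ω, ω²}`,
`S_△(n, 3) ≥ c·n^{log 102 / log 15}` for some `c > 0` and all large `n`. -/
theorem stmt6 :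
    ∃ c : ℝ, 0 < c ∧ ∃ N : ℕ, ∀ n : ℕ, N ≤ n →
      c * (n : ℝ) ^ (Real.log 102 / Real.log 15) ≤ (SPnm triEq n 3 : ℝ) := by

  refine ⟨29 / 102 ^ 2, by norm_num, 15, fun n hn => ?_⟩
  set k := Nat.log 15 n with hk
  have hkpos : 0 < k := Nat.log_pos (by norm_num) hn
  have hlow : 15 ^ k ≤ n := Nat.pow_log_le_self 15 (by omega)
  have hhigh : n < 15 ^ (k + 1) := Nat.lt_pow_succ_log_self (by norm_num) n
  obtain ⟨Q0, hGP0, hcard0, hT0⟩ := grow (k - 1)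
  have hcard0' : Q0.card = 15 ^ k := by rw [hcard0]; congr 1; omega
  obtain ⟨Q, hGPQ, hcardQ, hTQ⟩ := padMany (n - 15 ^ k) Q0 hGP0
  have hcardQ' : Q.card = n := by rw [hcardQ, hcard0']; omega
  have hSP : 29 * 102 ^ (k - 1) ≤ SPnm triEq n 3 :=
    le_trans (le_trans hT0 (le_trans hTQ (tplus_le_SP Q))) (SP_le_SPnm hcardQ' hGPQ)
  have hα : (0:ℝ) ≤ Real.log 102 / Real.log 15 :=
    div_nonneg (Real.log_nonneg (by norm_num)) (Real.log_nonneg (by norm_num))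
  have h15 : (15 : ℝ) ^ (Real.log 102 / Real.log 15) = 102 := by
    rw [Real.rpow_def_of_pos (by norm_num), mul_comm,
      div_mul_cancel₀ _ (ne_of_gt (Real.log_pos (by norm_num))), Real.exp_log]
    norm_num
  have hmono : (n : ℝ) ^ (Real.log 102 / Real.log 15) ≤ (102 : ℝ) ^ (k + 1) := by
    calc (n : ℝ) ^ (Real.log 102 / Real.log 15)
        ≤ ((15 : ℝ) ^ (k + 1) : ℝ) ^ (Real.log 102 / Real.log 15) := by
          apply Real.rpow_le_rpow (Nat.cast_nonneg n) ?_ hα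
          exact_mod_cast le_of_lt hhigh
    _ = (102 : ℝ) ^ (k + 1) := by
          rw [← Real.rpow_natCast (15 : ℝ) (k + 1), ← Real.rpow_mul (by norm_num),
            mul_comm, Real.rpow_mul (by norm_num), h15, Real.rpow_natCast]
  have hc2 : (0:ℝ) ≤ 29 / 102 ^ 2 := by norm_num
  calc (29 / 102 ^ 2 : ℝ) * (n : ℝ) ^ (Real.log 102 / Real.log 15)
      ≤ 29 / 102 ^ 2 * (102 : ℝ) ^ (k + 1) := mul_le_mul_of_nonneg_left hmono hc2
  _ = 29 * (102 : ℝ) ^ (k - 1) := by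
      have hkk : k + 1 = (k - 1) + 2 := by omega
      rw [hkk, pow_add]
      ring
  _ ≤ (SPnm triEq n 3 : ℝ) := by exact_mod_cast hSP
end
end

section
/- Let A and P be finite nonempty sets of complex numbers with |P| ≥ 2, let u, v ∈ ℂ, and let Q = Q(P, A, u, v) := ⋃_{p ∈ P} (u·p + (v·p − p + 1)·A), where u·p + (v·p − p + 1)·A := {u·p + (v·p − p + 1)·a : a ∈ A}. If Q has exactly |A|·|P| points, then S_P(Q) ≥ |P|·S_P(A) + |A|. -/
open MeasureTheory

noncomputable section

lemma similar_card {P Q : Finset ℂ} (h : IsSimilarCopy P Q) : Q.card = P.card := by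
  classical
  obtain ⟨z, w, hz, heq⟩ := h
  have : Q = P.image (fun p => z * p + w) := by
    apply Finset.coe_injective
    rw [Finset.coe_image, heq]
  rw [this]
  apply Finset.card_image_of_injective
  intro x y hxy
  have : z * x = z * y := by linear_combination hxy
  exact mul_left_cancel₀ hz this

lemma similar_image {P S : Finset ℂ} (h : IsSimilarCopy P S) {z' : ℂ} (w' : ℂ) (hz' : z' ≠ 0) :
    IsSimilarCopy P (S.image fun x => z' * x + w') := by
  classical
  obtain ⟨z, w, hz, heq⟩ := h
  refine ⟨z' * z, z' * w + w', mul_ne_zero hz' hz, ?_⟩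
  rw [Finset.coe_image, heq, ← Set.image_comp]
  apply Set.image_congr
  intro p _
  simp only [Function.comp]
  ring

/-- If `Q = Q(P, A, u, v)` has exactly `|A|·|P|` points, then
`S_P(Q) ≥ |P|·S_P(A) + |A|`. -/
theorem stmt12 (P A : Finset ℂ) (hP : 2 ≤ P.card) (hA : A.Nonempty) (u v : ℂ)
    (hcard : (Qset P A u v).card = A.card * P.card) :
    P.card * SP P A + A.card ≤ SP P (Qset P A u v) := by
  letI : DecidablePred (IsSimilarCopy P) := Classical.decPred (IsSimilarCopy P)
  letI : DecidableEq ℂ := Classical.decEq ℂ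
  have hSP : ∀ X : Finset ℂ, SP P X = (X.powerset.filter (IsSimilarCopy P)).card := by
    intro X
    simp only [SP]
  set f : ℂ → ℂ → ℂ := fun p a => u * p + (v * p - p + 1) * a with hf
  -- Qset as an image over the product
  have hQ : Qset P A u v = (P ×ˢ A).image (fun pa => f pa.1 pa.2) := by
    ext x
    simp only [Qset, Finset.mem_biUnion, Finset.mem_image, Finset.mem_product, Prod.exists, f]
    constructor
    · rintro ⟨p, hp, a, ha, hx⟩; exact ⟨p, a, ⟨hp, ha⟩, hx⟩
    · rintro ⟨p, a, ⟨hp, ha⟩, hx⟩; exact ⟨p, hp, a, ha, hx⟩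
  have hinj : Set.InjOn (fun pa : ℂ × ℂ => f pa.1 pa.2) ↑(P ×ˢ A) := by
    rw [← Finset.card_image_iff, ← hQ, hcard, Finset.card_product, mul_comm]
  have hinj' : ∀ p ∈ P, ∀ a ∈ A, ∀ p' ∈ P, ∀ a' ∈ A, f p a = f p' a' → p = p' ∧ a = a' := by
    intro p hp a ha p' hp' a' ha' h
    have hm : ((p, a) : ℂ × ℂ) ∈ (↑(P ×ˢ A) : Set (ℂ × ℂ)) := by
      simp [Finset.mem_product, hp, ha]
    have hm' : ((p', a') : ℂ × ℂ) ∈ (↑(P ×ˢ A) : Set (ℂ × ℂ)) := by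
      simp [Finset.mem_product, hp', ha']
    have := hinj hm hm' h
    exact ⟨congrArg Prod.fst this, congrArg Prod.snd this⟩
  obtain ⟨p₁, hp₁, p₂, hp₂, hp12⟩ := Finset.one_lt_card.mp (by omega : 1 < P.card)
  have hfp : ∀ p a : ℂ, f p a = (u + (v - 1) * a) * p + a := by
    intro p a; simp only [f]; ring
  -- the "diagonal" scale is nonzero
  have hz : ∀ a ∈ A, u + (v - 1) * a ≠ 0 := by
    intro a ha h0
    have : f p₁ a = f p₂ a := by rw [hfp, hfp, h0]; ring
    exact hp12 (hinj' p₁ hp₁ a ha p₂ hp₂ a ha this).1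
  set PA := A.powerset.filter (IsSimilarCopy P) with hPA
  have hPAmem : ∀ A' ∈ PA, A' ⊆ A ∧ IsSimilarCopy P A' := by
    intro A' h
    rw [hPA, Finset.mem_filter, Finset.mem_powerset] at h
    exact h
  -- the block scale is nonzero whenever a similar copy exists in the block
  have hcp : ∀ p ∈ P, ∀ A' ∈ PA, v * p - p + 1 ≠ 0 := by
    intro p hp A' hA' h0
    obtain ⟨hsub, hsim⟩ := hPAmem A' hA'
    have hcardA' : 1 < A'.card := by rw [similar_card hsim]; omega
    obtain ⟨a, ha, a', ha', haa⟩ := Finset.one_lt_card.mp hcardA'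
    have : f p a = f p a' := by simp only [f, h0]; ring
    exact haa (hinj' p hp a (hsub ha) p hp a' (hsub ha') this).2
  set S1 : Finset (Finset ℂ) := (P ×ˢ PA).image (fun x => x.2.image (f x.1)) with hS1
  set S2 : Finset (Finset ℂ) := A.image (fun a => P.image (fun p => f p a)) with hS2
  -- injectivity for S1
  have hinjS1 : Set.InjOn (fun x : ℂ × Finset ℂ => x.2.image (f x.1)) ↑(P ×ˢ PA) := by
    rintro ⟨p, A'⟩ hm ⟨p', A''⟩ hm' heq
    simp only [Finset.coe_product, Set.mem_prod, Finset.mem_coe] at hm hm'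
    obtain ⟨hp, hA'⟩ := hm
    obtain ⟨hp', hA''⟩ := hm'
    obtain ⟨hsub, hsim⟩ := hPAmem _ hA'
    obtain ⟨hsub', hsim'⟩ := hPAmem _ hA''
    simp only at heq
    have hne : A'.Nonempty := by
      rw [← Finset.card_pos, similar_card hsim]; omega
    obtain ⟨a, ha⟩ := hne
    have h1 : f p a ∈ A''.image (f p') := by rw [← heq]; exact Finset.mem_image_of_mem _ ha
    obtain ⟨a'', ha'', heq2⟩ := Finset.mem_image.mp h1
    have hpp : p' = p := (hinj' p' hp' a'' (hsub' ha'') p hp a (hsub ha) heq2).1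
    subst hpp
    have hAA : A' = A'' := by
      ext x
      constructor
      · intro hx
        have : f p' x ∈ A''.image (f p') := by rw [← heq]; exact Finset.mem_image_of_mem _ hx
        obtain ⟨y, hy, hxy⟩ := Finset.mem_image.mp this
        rwa [(hinj' p' hp' y (hsub' hy) p' hp' x (hsub hx) hxy).2] at hy
      · intro hx
        have : f p' x ∈ A'.image (f p') := by rw [heq]; exact Finset.mem_image_of_mem _ hx
        obtain ⟨y, hy, hxy⟩ := Finset.mem_image.mp this
        rwa [(hinj' p' hp' y (hsub hy) p' hp' x (hsub' hx) hxy).2] at hy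
    rw [hAA]
  have hcardS1 : S1.card = P.card * PA.card := by
    rw [hS1, Finset.card_image_of_injOn hinjS1, Finset.card_product]
  -- injectivity for S2
  have hinjS2 : Set.InjOn (fun a => P.image (fun p => f p a)) ↑A := by
    intro a ha a' ha' heq
    simp only [Finset.mem_coe] at ha ha'
    have heq' : P.image (fun p => f p a) = P.image (fun p => f p a') := heq
    have h1 : f p₁ a ∈ P.image (fun p => f p a') := by
      rw [← heq']; exact Finset.mem_image_of_mem _ hp₁
    obtain ⟨p', hp', heq2⟩ := Finset.mem_image.mp h1
    exact ((hinj' p' hp' a' ha' p₁ hp₁ a ha heq2).2).symm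
  have hcardS2 : S2.card = A.card := by
    rw [hS2, Finset.card_image_of_injOn hinjS2]
  -- membership of union in the filter set
  have hmemQ : ∀ p ∈ P, ∀ a ∈ A, f p a ∈ Qset P A u v := by
    intro p hp a ha
    rw [hQ]
    have hpa : (p, a) ∈ P ×ˢ A := Finset.mem_product.mpr ⟨hp, ha⟩
    exact Finset.mem_image_of_mem _ hpa
  have hsub1 : S1 ⊆ (Qset P A u v).powerset.filter (IsSimilarCopy P) := by
    intro X hX
    obtain ⟨⟨p, A'⟩, hm, hXeq⟩ := Finset.mem_image.mp hX
    rw [Finset.mem_product] at hm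
    obtain ⟨hp, hA'⟩ := hm
    obtain ⟨hsubA, hsim⟩ := hPAmem _ hA'
    rw [Finset.mem_filter, Finset.mem_powerset]
    constructor
    · rw [← hXeq]
      intro x hx
      obtain ⟨a, ha, hxa⟩ := Finset.mem_image.mp hx
      rw [← hxa]; exact hmemQ p hp a (hsubA ha)
    · rw [← hXeq]
      have him : A'.image (f p) = A'.image (fun x => (v * p - p + 1) * x + u * p) := by
        apply Finset.image_congr
        intro x _
        simp only [f]; ring
      simp only
      rw [him]
      exact similar_image hsim (u * p) (hcp p hp A' hA')
  have hsub2 : S2 ⊆ (Qset P A u v).powerset.filter (IsSimilarCopy P) := by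
    intro X hX
    obtain ⟨a, ha, hXeq⟩ := Finset.mem_image.mp hX
    rw [Finset.mem_filter, Finset.mem_powerset]
    constructor
    · rw [← hXeq]
      intro x hx
      obtain ⟨p, hp, hxp⟩ := Finset.mem_image.mp hx
      rw [← hxp]; exact hmemQ p hp a ha
    · rw [← hXeq]
      refine ⟨u + (v - 1) * a, a, hz a ha, ?_⟩
      rw [Finset.coe_image]
      apply Set.image_congr
      intro p _
      rw [hfp]
  -- disjointness
  have hdisj : Disjoint S1 S2 := by
    rw [Finset.disjoint_left]
    intro X hX1 hX2
    obtain ⟨⟨p₀, A'⟩, hm, hXeq1⟩ := Finset.mem_image.mp hX1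
    rw [Finset.mem_product] at hm
    obtain ⟨hp₀, hA'⟩ := hm
    obtain ⟨hsubA, _⟩ := hPAmem _ hA'
    obtain ⟨a, ha, hXeq2⟩ := Finset.mem_image.mp hX2
    simp only at hXeq1
    have key : ∀ p ∈ P, p = p₀ := by
      intro p hp
      have h1 : f p a ∈ A'.image (f p₀) := by
        rw [hXeq1, ← hXeq2]; exact Finset.mem_image_of_mem _ hp
      obtain ⟨x, hx, hxe⟩ := Finset.mem_image.mp h1
      exact ((hinj' p₀ hp₀ x (hsubA hx) p hp a ha hxe).1).symm
    exact hp12 ((key p₁ hp₁).trans (key p₂ hp₂).symm)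
  -- conclude
  have hunion : S1 ∪ S2 ⊆ (Qset P A u v).powerset.filter (IsSimilarCopy P) :=
    Finset.union_subset hsub1 hsub2
  calc P.card * SP P A + A.card = S1.card + S2.card := by
        rw [hSP, hcardS1, hcardS2, hPA]
    _ = (S1 ∪ S2).card := (Finset.card_union_of_disjoint hdisj).symm
    _ ≤ ((Qset P A u v).powerset.filter (IsSimilarCopy P)).card := Finset.card_le_card hunion
    _ = SP P (Qset P A u v) := (hSP _).symm
end
end
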